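/- arXiv:2105.07679 — 7 statements merged into one kernel-verified Lean document; each statement's English description precedes it below -/
import Mathlib

section
/- Let M : Matrix (Fin m₁ × m₂) (Fin n₁ × n₂) ℂ with blocks M_{i,j}, and let t ≤ m₁. Suppose: (a) the blocks M_{0,0}, …, M_{t-1,0} of the first block-column are linearly independent; (b) M_{i,0} = 0 for all i ≥ t; (c) there exist i₀ ≥ t and j₀ ≠ 0 such that M_{i₀,j₀} is not in the span of {M_{0,0}, …, M_{t-1,0}}. Then there exists a constant k ∈ ℂ such that the family {M_{i,0} + k • M_{i,j₀} : i ∈ Fin m₁} (the first block-column after adding k times the j₀-th block-column) spans a subspace of Matrix m₂ n₂ ℂ of dimension at least t + 1. -/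
open Matrix Submodule Module

/-- The `(i,j)`-block of a bipartite matrix. -/
noncomputable def blockOf {m₁ n₁ m₂ n₂ : Type*}
    (M : Matrix (m₁ × m₂) (n₁ × n₂) ℂ) (i : m₁) (j : n₁) : Matrix m₂ n₂ ℂ :=
  Matrix.of fun k l => M (i, k) (j, l)

set_option maxRecDepth 16000
set_option maxHeartbeats 1000000

/-- Lemma 4(i): if the first `t` blocks of the first block-column are linearly
independent, the remaining blocks of the first block-column vanish, and some block
`M_{i₀,j₀}` (with `i₀ ≥ t`, `j₀ ≠ 0`) is outside the span of these `t` blocks, then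
for some constant `k` the first block-column plus `k` times the `j₀`-th block-column
spans a space of dimension at least `t + 1`. -/
theorem exists_const_column_update_dim_ge
    {m₁ n₁ : ℕ} {m₂ n₂ : Type*} [Fintype m₂] [Fintype n₂] [NeZero n₁]
    (M : Matrix (Fin m₁ × m₂) (Fin n₁ × n₂) ℂ) (t : ℕ) (ht : t ≤ m₁)
    (ha : LinearIndependent ℂ
      (fun i : Fin t => blockOf M ⟨i.val, lt_of_lt_of_le i.isLt ht⟩ 0))
    (hb : ∀ i : Fin m₁, t ≤ i.val → blockOf M i 0 = 0)
    (i₀ : Fin m₁) (j₀ : Fin n₁) (hi₀ : t ≤ i₀.val) (hj₀ : j₀ ≠ 0)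
    (hnot : blockOf M i₀ j₀ ∉ Submodule.span ℂ
      (Set.range fun i : Fin t => blockOf M ⟨i.val, lt_of_lt_of_le i.isLt ht⟩ 0)) :
    ∃ k : ℂ, t + 1 ≤ Module.finrank ℂ (Submodule.span ℂ
      (Set.range fun i : Fin m₁ => blockOf M i 0 + k • blockOf M i j₀)) := by
  classical
  set v : Fin t → Matrix m₂ n₂ ℂ :=
    fun i => blockOf M ⟨i.val, lt_of_lt_of_le i.isLt ht⟩ 0 with hv
  set w : Fin t → Matrix m₂ n₂ ℂ :=
    fun i => blockOf M ⟨i.val, lt_of_lt_of_le i.isLt ht⟩ j₀ with hw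
  set w₀ : Matrix m₂ n₂ ℂ := blockOf M i₀ j₀ with hw₀
  set b : Fin (t + 1) → Matrix m₂ n₂ ℂ := Fin.snoc v w₀ with hbdef
  have hb_li : LinearIndependent ℂ b := linearIndependent_fin_snoc.2 ⟨ha, hnot⟩
  -- coordinates dual to `b`
  obtain ⟨S', hS'⟩ := Submodule.exists_isCompl (Submodule.span ℂ (Set.range b))
  set π := Submodule.linearProjOfIsCompl _ S' hS' with hπ
  set B : Basis (Fin (t + 1)) ℂ (Submodule.span ℂ (Set.range b)) := Basis.span hb_li with hB
  set φ : Matrix m₂ n₂ ℂ →ₗ[ℂ] (Fin (t + 1) → ℂ) :=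
    (Finsupp.linearEquivFunOnFinite ℂ ℂ (Fin (t + 1))).toLinearMap ∘ₗ
      B.repr.toLinearMap ∘ₗ π with hφdef
  have hφ : ∀ i, φ (b i) = Pi.single i 1 := by
    intro i
    have hmem : b i ∈ Submodule.span ℂ (Set.range b) := subset_span (Set.mem_range_self i)
    have h1 : π (b i) = B i := by
      have h2 : (B i : Matrix m₂ n₂ ℂ) = b i := congrArg Subtype.val (Basis.span_apply hb_li i)
      have := Submodule.linearProjOfIsCompl_apply_left hS' (B i)
      rw [h2] at this
      exact this
    simp only [hφdef, LinearMap.coe_comp, Function.comp_apply, LinearEquiv.coe_coe, h1,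
      Basis.repr_self]
    ext j
    simp [Finsupp.single_apply, Pi.single_apply, eq_comm]
  -- the polynomial matrix
  set P : Matrix (Fin (t + 1)) (Fin (t + 1)) (Polynomial ℂ) :=
    Matrix.of (Fin.snoc
      (fun i j => Polynomial.C (φ (v i) j) + Polynomial.X * Polynomial.C (φ (w i) j))
      (fun j => Polynomial.C (φ w₀ j))) with hP
  have hP0 : P.map (Polynomial.eval 0) = 1 := by
    ext i j
    refine Fin.lastCases ?_ ?_ i
    · have hbl : b (Fin.last t) = w₀ := Fin.snoc_last _ _
      simp only [hP, Matrix.map_apply, Matrix.of_apply, Fin.snoc_last]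
      rw [show φ w₀ = Pi.single (Fin.last t) 1 by rw [← hbl]; exact hφ _]
      simp only [Matrix.one_apply, Pi.single_apply, eq_comm]
      split_ifs <;> simp
    · intro i'
      have hbc : b (Fin.castSucc i') = v i' := Fin.snoc_castSucc _ _ _
      simp only [hP, Matrix.map_apply, Matrix.of_apply, Fin.snoc_castSucc]
      rw [show φ (v i') = Pi.single (Fin.castSucc i') 1 by rw [← hbc]; exact hφ _]
      simp only [Matrix.one_apply, Pi.single_apply, eq_comm]
      split_ifs <;> simp
  have hdetk : ∀ c : ℂ, (P.map (Polynomial.eval c)).det = P.det.eval c := by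
    intro c
    have := RingHom.map_det (Polynomial.evalRingHom c) P
    simpa [RingHom.mapMatrix_apply, Polynomial.coe_evalRingHom] using this.symm
  have hPdet : P.det ≠ 0 := by
    intro h
    have h1 : (P.map (Polynomial.eval 0)).det = (1 : ℂ) := by rw [hP0, Matrix.det_one]
    rw [hdetk, h] at h1
    simp at h1
  -- choose k avoiding 0 and roots
  have hfin : ({(0 : ℂ)} ∪ {x | P.det.IsRoot x}).Finite :=
    (Set.finite_singleton 0).union (Polynomial.finite_setOf_isRoot hPdet)
  obtain ⟨k, hk⟩ := hfin.infinite_compl.nonempty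
  simp only [Set.mem_compl_iff, Set.mem_union, Set.mem_singleton_iff, Set.mem_setOf_eq,
    not_or] at hk
  obtain ⟨hk0, hkroot⟩ := hk
  refine ⟨k, ?_⟩
  -- evaluated matrix
  set A : Matrix (Fin (t + 1)) (Fin (t + 1)) ℂ := P.map (Polynomial.eval k) with hA
  have hAdet : A.det ≠ 0 := by
    rw [hA, hdetk]
    exact hkroot
  have hArows : LinearIndependent ℂ (fun i => A i) :=
    Matrix.linearIndependent_rows_iff_isUnit.2 ((Matrix.isUnit_iff_isUnit_det A).2 hAdet.isUnit)
  -- the updated vectors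
  set u : Fin (t + 1) → Matrix m₂ n₂ ℂ := Fin.snoc (fun i => v i + k • w i) w₀ with hu
  have hφu : φ ∘ u = fun i => A i := by
    funext i
    refine Fin.lastCases ?_ ?_ i
    · show φ (u (Fin.last t)) = A (Fin.last t)
      have h1 : u (Fin.last t) = w₀ := Fin.snoc_last _ _
      funext j
      have h2 : P (Fin.last t) j = Polynomial.C (φ w₀ j) :=
        congrFun (Fin.snoc_last (α := fun _ => Fin (t + 1) → Polynomial ℂ)
          (p := fun i j => Polynomial.C (φ (v i) j) + Polynomial.X * Polynomial.C (φ (w i) j))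
          (x := fun j => Polynomial.C (φ w₀ j))) j
      rw [hA, Matrix.map_apply, h2, h1, Polynomial.eval_C]
    · intro i'
      show φ (u (Fin.castSucc i')) = A (Fin.castSucc i')
      have h1 : u (Fin.castSucc i') = v i' + k • w i' := Fin.snoc_castSucc _ _ _
      funext j
      have h2 : P (Fin.castSucc i') j =
          Polynomial.C (φ (v i') j) + Polynomial.X * Polynomial.C (φ (w i') j) :=
        congrFun (Fin.snoc_castSucc (α := fun _ => Fin (t + 1) → Polynomial ℂ)
          (p := fun i j => Polynomial.C (φ (v i) j) + Polynomial.X * Polynomial.C (φ (w i) j))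
          (x := fun j => Polynomial.C (φ w₀ j)) (i := i')) j
      rw [hA, Matrix.map_apply, h2, h1, map_add, LinearMap.map_smul, Polynomial.eval_add,
        Polynomial.eval_mul, Polynomial.eval_X, Polynomial.eval_C, Polynomial.eval_C,
        Pi.add_apply, Pi.smul_apply, smul_eq_mul, mul_comm]
  have hu_li : LinearIndependent ℂ u := by
    apply LinearIndependent.of_comp φ
    rw [hφu]
    exact hArows
  have hcard : Module.finrank ℂ (Submodule.span ℂ (Set.range u)) = t + 1 := by
    rw [finrank_span_eq_card hu_li, Fintype.card_fin]
  have hle : Submodule.span ℂ (Set.range u) ≤ Submodule.span ℂ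
      (Set.range fun i : Fin m₁ => blockOf M i 0 + k • blockOf M i j₀) := by
    rw [Submodule.span_le]
    rintro x ⟨i, rfl⟩
    refine Fin.lastCases ?_ ?_ i
    · have : u (Fin.last t) = w₀ := Fin.snoc_last _ _
      rw [this]
      have hF : blockOf M i₀ 0 + k • blockOf M i₀ j₀ = k • w₀ := by
        rw [hb i₀ hi₀, zero_add]
      have : w₀ = k⁻¹ • (blockOf M i₀ 0 + k • blockOf M i₀ j₀) := by
        rw [hF, smul_smul, inv_mul_cancel₀ hk0, one_smul]
      rw [this]
      exact Submodule.smul_mem _ _ (subset_span ⟨i₀, rfl⟩)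
    · intro i'
      have : u (Fin.castSucc i') = v i' + k • w i' := Fin.snoc_castSucc _ _ _
      rw [this]
      exact subset_span ⟨⟨i'.val, lt_of_lt_of_le i'.isLt ht⟩, rfl⟩
  calc t + 1 = Module.finrank ℂ (Submodule.span ℂ (Set.range u)) := hcard.symm
    _ ≤ _ := Submodule.finrank_mono hle
end

section
/- Let M : Matrix (Fin s × m₂) (Fin n₁ × n₂) ℂ with blocks M_{i,j}, and let t < s. Suppose: (a) the s + t blocks M_{0,0}, …, M_{s-1,0}, M_{0,1}, …, M_{t-1,1} are linearly independent; (b) for every i with t ≤ i ≤ s−1, the block M_{i,1} lies in the span of {M_{0,0}, …, M_{s-1,0}}; (c) there exist i₀ with t ≤ i₀ ≤ s−1 and j₀ ≥ 2 such that M_{i₀,j₀} is not in the span of the s + t blocks from (a). Then there exists a constant k ∈ ℂ such that the family {M_{i,0} : i < s} ∪ {M_{i,1} + k • M_{i,j₀} : i < s} spans a subspace of Matrix m₂ n₂ ℂ of dimension at least s + t + 1. -/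
open Matrix Submodule Module

open Polynomial in
private lemma exists_k_linearIndependent {V : Type*} [AddCommGroup V] [Module ℂ V]
    [FiniteDimensional ℂ V]
    {ι : Type*} [Fintype ι] [DecidableEq ι] (F G : ι → V)
    (hF : LinearIndependent ℂ F) :
    ∃ k : ℂ, k ≠ 0 ∧ LinearIndependent ℂ (fun i => F i + k • G i) := by
  classical
  set W := Submodule.span ℂ (Set.range F) with hW
  obtain ⟨W', hW'⟩ := W.exists_isCompl
  let b : Basis ι ℂ W := Basis.span hF
  let proj : V →ₗ[ℂ] W := W.linearProjOfIsCompl W' hW'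
  let f : ι → V →ₗ[ℂ] ℂ := fun i => (b.coord i).comp proj
  have hf : ∀ i j, f i (F j) = if j = i then 1 else 0 := by
    intro i j
    have hmem : F j ∈ W := Submodule.subset_span (Set.mem_range_self j)
    have h1 : proj (F j) = b j := by
      have h2 : proj ((⟨F j, hmem⟩ : W) : V) = ⟨F j, hmem⟩ :=
        Submodule.linearProjOfIsCompl_apply_left hW' _
      have h3 : (b j : V) = F j := congrArg Subtype.val (Basis.span_apply hF j)
      rw [show F j = ((⟨F j, hmem⟩ : W) : V) from rfl, h2]
      exact Subtype.ext h3.symm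
    simp only [f, LinearMap.comp_apply, h1, Basis.coord_apply, Basis.repr_self_apply]
  let D : Matrix ι ι ℂ := Matrix.of fun i j => f i (G j)
  let p : Polynomial ℂ := (1 + (X : ℂ[X]) • D.map C).det
  have heval : ∀ k : ℂ, p.eval k = (1 + k • D).det := by
    intro k
    have h := RingHom.map_det (evalRingHom k) (1 + (X : ℂ[X]) • D.map C)
    have h2 : (1 + (X : ℂ[X]) • D.map C).map (evalRingHom k) = 1 + k • D := by
      ext i j
      by_cases hij : i = j
      · subst hij
        simp only [Matrix.map_apply, Matrix.add_apply, Matrix.smul_apply, Matrix.one_apply,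
          if_pos rfl, smul_eq_mul]
        rw [coe_evalRingHom, eval_add, if_pos trivial, eval_one, eval_mul, eval_X, eval_C, if_pos trivial]
      · simp only [Matrix.map_apply, Matrix.add_apply, Matrix.smul_apply, Matrix.one_apply,
          if_neg hij, smul_eq_mul]
        rw [zero_add, zero_add, coe_evalRingHom, eval_mul, eval_X, eval_C]
    rw [RingHom.mapMatrix_apply, h2] at h
    exact h
  have hp0 : p.eval 0 = 1 := by
    rw [heval 0]; simp
  have hp : p ≠ 0 := fun h => by simp [h] at hp0
  have hfin : ({x : ℂ | p.IsRoot x} ∪ {0}).Finite :=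
    (Polynomial.finite_setOf_isRoot hp).union (Set.finite_singleton 0)
  obtain ⟨k, hk⟩ := hfin.infinite_compl.nonempty
  rw [Set.mem_compl_iff, Set.mem_union, not_or] at hk
  obtain ⟨hkroot, hk0'⟩ := hk
  have hk0 : k ≠ 0 := by simpa using hk0'
  have hdet : (1 + k • D).det ≠ 0 := by rw [← heval]; exact hkroot
  refine ⟨k, hk0, ?_⟩
  rw [Fintype.linearIndependent_iff]
  intro c hc
  have hmv : (1 + k • D).mulVec c = 0 := by
    funext j
    have h := congrArg (f j) hc
    rw [map_sum, map_zero] at h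
    have : ∀ i, f j (c i • (F i + k • G i)) = ((1 + k • D) j i) * c i := by
      intro i
      rw [_root_.map_smul, map_add, _root_.map_smul, hf]
      simp only [Matrix.add_apply, Matrix.one_apply, Matrix.smul_apply, D, Matrix.of_apply,
        smul_eq_mul]
      by_cases hij : i = j
      · subst hij; simp [add_comm, mul_comm, mul_left_comm]
      · simp [hij, Ne.symm hij, mul_comm, mul_left_comm]
    rw [Finset.sum_congr rfl (fun i _ => this i)] at h
    simpa [Matrix.mulVec, dotProduct] using h
  have hcz : c = 0 := by
    have := congrArg (fun w => (1 + k • D)⁻¹.mulVec w) hmv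
    simpa [Matrix.mulVec_mulVec, Matrix.nonsing_inv_mul _ (isUnit_iff_ne_zero.mpr hdet)]
      using this
  intro i; rw [hcz]; rfl

/-- Lemma 4(ii): suppose the `s + t` blocks
`M_{0,0}, …, M_{s-1,0}, M_{0,1}, …, M_{t-1,1}` are linearly independent, each block
`M_{i,1}` with `t ≤ i ≤ s-1` lies in the span of the first block-column, and some block
`M_{i₀,j₀}` (with `t ≤ i₀`, `2 ≤ j₀`) lies outside the span of those `s + t` blocks.
Then for some constant `k`, the first block-column together with the second
block-column plus `k` times the `j₀`-th block-column spans a space of dimension at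
least `s + t + 1`. -/
theorem exists_const_second_column_update_dim_ge
    {s n₁ : ℕ} {m₂ n₂ : Type*} [Fintype m₂] [Fintype n₂]
    (hn₁ : 2 ≤ n₁)
    (M : Matrix (Fin s × m₂) (Fin n₁ × n₂) ℂ) (t : ℕ) (hts : t < s)
    (ha : LinearIndependent ℂ (Sum.elim
      (fun i : Fin s => blockOf M i ⟨0, by omega⟩)
      (fun i : Fin t => blockOf M ⟨i.val, lt_trans i.isLt hts⟩ ⟨1, by omega⟩)))
    (hb : ∀ i : Fin s, t ≤ i.val →
      blockOf M i ⟨1, by omega⟩ ∈ Submodule.span ℂ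
        (Set.range fun i : Fin s => blockOf M i ⟨0, by omega⟩))
    (i₀ : Fin s) (j₀ : Fin n₁) (hi₀ : t ≤ i₀.val) (hj₀ : 2 ≤ j₀.val)
    (hnot : blockOf M i₀ j₀ ∉ Submodule.span ℂ (Set.range (Sum.elim
      (fun i : Fin s => blockOf M i ⟨0, by omega⟩)
      (fun i : Fin t => blockOf M ⟨i.val, lt_trans i.isLt hts⟩ ⟨1, by omega⟩)))) :
    ∃ k : ℂ, s + t + 1 ≤ Module.finrank ℂ (Submodule.span ℂ (Set.range (Sum.elim
      (fun i : Fin s => blockOf M i ⟨0, by omega⟩)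
      (fun i : Fin s => blockOf M i ⟨1, by omega⟩ + k • blockOf M i j₀)))) := by
  classical
  have hF : LinearIndependent ℂ (fun o : Option (Fin s ⊕ Fin t) =>
      Option.casesOn' o (blockOf M i₀ j₀) (Sum.elim
        (fun i : Fin s => blockOf M i ⟨0, by omega⟩)
        (fun i : Fin t => blockOf M ⟨i.val, lt_trans i.isLt hts⟩ ⟨1, by omega⟩))) :=
    LinearIndependent.option ha hnot
  obtain ⟨k, hk0, hli⟩ := exists_k_linearIndependent _
    (fun o : Option (Fin s ⊕ Fin t) => Option.casesOn' o 0
      (Sum.elim (fun _ : Fin s => (0 : Matrix m₂ n₂ ℂ))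
        (fun i : Fin t => blockOf M ⟨i.val, lt_trans i.isLt hts⟩ j₀)))
    hF
  refine ⟨k, ?_⟩
  set S := Submodule.span ℂ (Set.range (Sum.elim
      (fun i : Fin s => blockOf M i ⟨0, by omega⟩)
      (fun i : Fin s => blockOf M i ⟨1, by omega⟩ + k • blockOf M i j₀))) with hS
  have huS : ∀ i : Fin s, blockOf M i (⟨0, by omega⟩ : Fin n₁) ∈ S := fun i =>
    Submodule.subset_span ⟨Sum.inl i, rfl⟩
  have hwS : ∀ i : Fin s,
      blockOf M i (⟨1, by omega⟩ : Fin n₁) + k • blockOf M i j₀ ∈ S := fun i =>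
    Submodule.subset_span ⟨Sum.inr i, rfl⟩
  have hcol1 : Submodule.span ℂ
      (Set.range fun i : Fin s => blockOf M i (⟨0, by omega⟩ : Fin n₁)) ≤ S := by
    apply Submodule.span_mono
    rintro _ ⟨i, rfl⟩; exact ⟨Sum.inl i, rfl⟩
  have hj₀S : blockOf M i₀ j₀ ∈ S := by
    have h1 : blockOf M i₀ (⟨1, by omega⟩ : Fin n₁) ∈ S := hcol1 (hb i₀ hi₀)
    have h2 : k • blockOf M i₀ j₀ ∈ S := by
      have h3 := S.sub_mem (hwS i₀) h1
      simpa using h3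
    have h4 := S.smul_mem k⁻¹ h2
    rwa [smul_smul, inv_mul_cancel₀ hk0, one_smul] at h4
  have hmem : ∀ o : Option (Fin s ⊕ Fin t),
      ((fun o => Option.casesOn' o (blockOf M i₀ j₀) (Sum.elim
        (fun i : Fin s => blockOf M i ⟨0, by omega⟩)
        (fun i : Fin t => blockOf M ⟨i.val, lt_trans i.isLt hts⟩ ⟨1, by omega⟩))) o
      + k • (fun o => Option.casesOn' o 0 (Sum.elim (fun _ : Fin s => (0 : Matrix m₂ n₂ ℂ))
        (fun i : Fin t => blockOf M ⟨i.val, lt_trans i.isLt hts⟩ j₀))) o) ∈ S := by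
    rintro (_ | (i | i))
    · simpa using hj₀S
    · simpa using huS i
    · exact hwS ⟨i.val, lt_trans i.isLt hts⟩
  have hle : Submodule.span ℂ (Set.range fun o : Option (Fin s ⊕ Fin t) =>
      (fun o => Option.casesOn' o (blockOf M i₀ j₀) (Sum.elim
        (fun i : Fin s => blockOf M i ⟨0, by omega⟩)
        (fun i : Fin t => blockOf M ⟨i.val, lt_trans i.isLt hts⟩ ⟨1, by omega⟩))) o
      + k • (fun o => Option.casesOn' o 0 (Sum.elim (fun _ : Fin s => (0 : Matrix m₂ n₂ ℂ))
        (fun i : Fin t => blockOf M ⟨i.val, lt_trans i.isLt hts⟩ j₀))) o) ≤ S :=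
    Submodule.span_le.mpr (Set.range_subset_iff.mpr hmem)
  have hcard := finrank_span_eq_card hli
  calc s + t + 1 = Fintype.card (Option (Fin s ⊕ Fin t)) := by simp
    _ ≤ Module.finrank ℂ S := by rw [← hcard]; exact Submodule.finrank_mono hle
end

section
/- Canonical form under local equivalence: let m₁, m₂, n₁, n₂ ≥ 1 and let M : Matrix (Fin m₁ × Fin m₂) (Fin n₁ × Fin n₂) ℂ have Schmidt rank K ≥ 1. Then there exist invertible matrices U : Matrix (Fin m₁) (Fin m₁) ℂ, V : Matrix (Fin m₂) (Fin m₂) ℂ, W : Matrix (Fin n₁) (Fin n₁) ℂ, X : Matrix (Fin n₂) (Fin n₂) ℂ, an integer p with 1 ≤ p ≤ n₁, and integers k₀ ≥ k₁ ≥ ⋯ ≥ k_{p-1} ≥ 1 with k₀ ≤ m₁ and k₀ + k₁ + ⋯ + k_{p-1} = K, such that the locally equivalent matrix N = (U ⊗ₖ V) * M * (W ⊗ₖ X) satisfies: (a) the family of blocks {N_{i,j} : j < p, i < k_j} (of cardinality K) is linearly independent; (b) N_{i,0} = 0 for every block-row index i ≥ k₀; (c) every block N_{i,j} of N lies in the span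 of {N_{a,b} : b ≤ min(j, p−1), a < k_b}. -/
open Matrix Submodule Module
open scoped Kronecker

/-- The Schmidt rank of a bipartite matrix: the dimension of the span of its blocks. -/
noncomputable def schmidtRank {m₁ n₁ m₂ n₂ : Type*}
    (M : Matrix (m₁ × m₂) (n₁ × n₂) ℂ) : ℕ :=
  Module.finrank ℂ (Submodule.span ℂ
    (Set.range fun ij : m₁ × n₁ => blockOf M ij.1 ij.2))

namespace ThmAux
variable {m₁ m₂ n₁ n₂ : ℕ}

lemma submodular {S : Type*} [AddCommGroup S] [Module ℂ S] [FiniteDimensional ℂ S]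
    (V V' R : Submodule ℂ S) (h : V ≤ V') :
    finrank ℂ ↥(V' ⊔ R) + finrank ℂ ↥V ≤ finrank ℂ ↥(V ⊔ R) + finrank ℂ ↥V' := by
  have key := Submodule.finrank_sup_add_finrank_inf_eq (V ⊔ R) V'
  have h1 : V ⊔ R ⊔ V' = V' ⊔ R := by
    rw [sup_comm V R, sup_assoc, sup_eq_right.mpr h, sup_comm]
  have h2 : V ≤ (V ⊔ R) ⊓ V' := le_inf le_sup_left h
  rw [h1] at key
  have := Submodule.finrank_mono h2
  omega

noncomputable def Bmap (M : Matrix (Fin m₁ × Fin m₂) (Fin n₁ × Fin n₂) ℂ) :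
    (Fin m₁ → ℂ) →ₗ[ℂ] (Fin n₁ → ℂ) →ₗ[ℂ] Matrix (Fin m₂) (Fin n₂) ℂ :=
  LinearMap.mk₂ ℂ (fun u w => ∑ a, ∑ b, (u a * w b) • blockOf M a b)
    (by intros; simp [add_mul, add_smul, Finset.sum_add_distrib])
    (by intros; simp [Finset.smul_sum, mul_assoc, smul_smul])
    (by intros; simp [mul_add, add_smul, Finset.sum_add_distrib])
    (by intros c u w; simp only [Finset.smul_sum, smul_smul]
        exact Finset.sum_congr rfl fun a _ => Finset.sum_congr rfl fun b _ => by
          rw [Pi.smul_apply, smul_eq_mul]; ring_nf)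

noncomputable def psi (M : Matrix (Fin m₁ × Fin m₂) (Fin n₁ × Fin n₂) ℂ) :
    (Fin n₁ → ℂ) →ₗ[ℂ] (Fin m₁ → ℂ) →ₗ[ℂ] Matrix (Fin m₂) (Fin n₂) ℂ :=
  (Bmap M).flip

noncomputable def Tspan (M : Matrix (Fin m₁ × Fin m₂) (Fin n₁ × Fin n₂) ℂ) :
    Submodule ℂ (Matrix (Fin m₂) (Fin n₂) ℂ) :=
  Submodule.span ℂ (Set.range fun ij : Fin m₁ × Fin n₁ => blockOf M ij.1 ij.2)

lemma Bmap_apply (M : Matrix (Fin m₁ × Fin m₂) (Fin n₁ × Fin n₂) ℂ) (u w) :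
    Bmap M u w = ∑ a, ∑ b, (u a * w b) • blockOf M a b := rfl

lemma psi_apply (M : Matrix (Fin m₁ × Fin m₂) (Fin n₁ × Fin n₂) ℂ) (w u) :
    psi M w u = Bmap M u w := rfl

lemma Bmap_mem_Tspan (M : Matrix (Fin m₁ × Fin m₂) (Fin n₁ × Fin n₂) ℂ) (u w) :
    Bmap M u w ∈ Tspan M := by
  rw [Bmap_apply]
  refine Submodule.sum_mem _ fun a _ => Submodule.sum_mem _ fun b _ => Submodule.smul_mem _ _ ?_
  exact Submodule.subset_span ⟨(a, b), rfl⟩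

lemma Bmap_single (M : Matrix (Fin m₁ × Fin m₂) (Fin n₁ × Fin n₂) ℂ) (a : Fin m₁) (b : Fin n₁) :
    Bmap M (Pi.single a 1) (Pi.single b 1) = blockOf M a b := by
  rw [Bmap_apply, Finset.sum_eq_single a, Finset.sum_eq_single b]
  · simp
  · intro c _ hc; simp [Pi.single_apply, hc]
  · simp
  · intro c _ hc; simp [Pi.single_apply, hc]
  · simp

lemma range_psi_le_Tspan (M : Matrix (Fin m₁ × Fin m₂) (Fin n₁ × Fin n₂) ℂ) (w) :
    LinearMap.range (psi M w) ≤ Tspan M := by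
  rintro x ⟨u, rfl⟩; exact Bmap_mem_Tspan M u w

attribute [local instance] Classical.propDecidable

variable (M : Matrix (Fin m₁ × Fin m₂) (Fin n₁ × Fin n₂) ℂ)

lemma wselSpec (V : Submodule ℂ (Matrix (Fin m₂) (Fin n₂) ℂ)) :
    ∃ w : Fin n₁ → ℂ, ∀ w', finrank ℂ ↥(V ⊔ LinearMap.range (psi M w')) ≤
      finrank ℂ ↥(V ⊔ LinearMap.range (psi M w)) := by
  set f : (Fin n₁ → ℂ) → ℕ := fun w => finrank ℂ ↥(V ⊔ LinearMap.range (psi M w)) with hf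
  have hbdd : BddAbove (Set.range f) := by
    refine ⟨finrank ℂ (Matrix (Fin m₂) (Fin n₂) ℂ), ?_⟩
    rintro x ⟨w, rfl⟩; exact Submodule.finrank_le _
  have hne : (Set.range f).Nonempty := ⟨f 0, ⟨0, rfl⟩⟩
  obtain ⟨w, hw⟩ := Nat.sSup_mem hne hbdd
  refine ⟨w, fun w' => ?_⟩
  have h := le_csSup hbdd (Set.mem_range_self (f := f) w')
  rw [← hw] at h
  exact h

noncomputable def wsel (V : Submodule ℂ (Matrix (Fin m₂) (Fin n₂) ℂ)) : Fin n₁ → ℂ :=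
  Classical.choose (wselSpec M V)

lemma wsel_max (V : Submodule ℂ (Matrix (Fin m₂) (Fin n₂) ℂ)) (w') :
    finrank ℂ ↥(V ⊔ LinearMap.range (psi M w')) ≤
      finrank ℂ ↥(V ⊔ LinearMap.range (psi M (wsel M V))) :=
  Classical.choose_spec (wselSpec M V) w'

noncomputable def chain : ℕ → Submodule ℂ (Matrix (Fin m₂) (Fin n₂) ℂ)
  | 0 => ⊥
  | j + 1 => chain j ⊔ LinearMap.range (psi M (wsel M (chain j)))

noncomputable def wg (j : ℕ) : Fin n₁ → ℂ := wsel M (chain M j)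

noncomputable def kf (j : ℕ) : ℕ := finrank ℂ ↥(chain M (j+1)) - finrank ℂ ↥(chain M j)

lemma chain_succ (j : ℕ) :
    chain M (j+1) = chain M j ⊔ LinearMap.range (psi M (wg M j)) := rfl

lemma chain_le_succ (j : ℕ) : chain M j ≤ chain M (j+1) := le_sup_left

lemma chain_mono : Monotone (chain M) :=
  monotone_nat_of_le_succ (chain_le_succ M)

lemma chain_le_Tspan (j : ℕ) : chain M j ≤ Tspan M := by
  induction j with
  | zero => exact bot_le
  | succ j ih => exact sup_le ih (range_psi_le_Tspan M _)

lemma chain_max (j : ℕ) (w) :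
    finrank ℂ ↥(chain M j ⊔ LinearMap.range (psi M w)) ≤ finrank ℂ ↥(chain M (j+1)) :=
  wsel_max M (chain M j) w

lemma finrank_chain_mono {i j : ℕ} (h : i ≤ j) :
    finrank ℂ ↥(chain M i) ≤ finrank ℂ ↥(chain M j) :=
  Submodule.finrank_mono (chain_mono M h)

lemma kf_succ_le (j : ℕ) : kf M (j+1) ≤ kf M j := by
  have hsub := submodular (chain M j) (chain M (j+1))
    (LinearMap.range (psi M (wg M (j+1)))) (chain_le_succ M j)
  have hmax := chain_max M j (wg M (j+1))
  have h1 := finrank_chain_mono M (Nat.le_succ j)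
  have h2 := finrank_chain_mono M (Nat.le_succ (j+1))
  rw [← chain_succ M (j+1)] at hsub
  unfold kf
  omega

lemma kf_mono {i j : ℕ} (h : i ≤ j) : kf M j ≤ kf M i := by
  induction j with
  | zero =>
    have : i = 0 := by omega
    subst this; exact le_rfl
  | succ j ih =>
    rcases Nat.eq_or_lt_of_le h with rfl | h'
    · exact le_rfl
    · exact le_trans (kf_succ_le M j) (ih (by omega))

lemma exists_stab : ∃ j, chain M (j+1) = chain M j := by
  by_contra h
  push_neg at h
  have hlt : ∀ j, chain M j < chain M (j+1) :=
    fun j => lt_of_le_of_ne (chain_le_succ M j) (Ne.symm (h j))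
  have hge : ∀ j, j ≤ finrank ℂ ↥(chain M j) := by
    intro j
    induction j with
    | zero => omega
    | succ j ih => exact lt_of_le_of_lt ih (Submodule.finrank_lt_finrank_of_lt (hlt j))
  have := hge (finrank ℂ (Matrix (Fin m₂) (Fin n₂) ℂ) + 1)
  have := Submodule.finrank_le (chain M (finrank ℂ (Matrix (Fin m₂) (Fin n₂) ℂ) + 1))
  omega

noncomputable def pval : ℕ := Nat.find (exists_stab M)

lemma chain_lt {j : ℕ} (h : j < pval M) : chain M j < chain M (j+1) :=
  lt_of_le_of_ne (chain_le_succ M j) (Ne.symm (Nat.find_min (exists_stab M) h))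

lemma kf_pos {j : ℕ} (h : j < pval M) : 1 ≤ kf M j := by
  have := Submodule.finrank_lt_finrank_of_lt (chain_lt M h)
  unfold kf; omega

lemma range_psi_le_chain_pval (w) :
    LinearMap.range (psi M w) ≤ chain M (pval M) := by
  have hstab : chain M (pval M + 1) = chain M (pval M) := Nat.find_spec (exists_stab M)
  have h1 : finrank ℂ ↥(chain M (pval M) ⊔ LinearMap.range (psi M w)) ≤
      finrank ℂ ↥(chain M (pval M)) := by
    have := chain_max M (pval M) w
    rwa [hstab] at this
  have h2 := Submodule.eq_of_le_of_finrank_le (le_sup_left :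
    chain M (pval M) ≤ chain M (pval M) ⊔ LinearMap.range (psi M w)) h1
  rw [h2]
  exact le_sup_right

lemma chain_pval_eq : chain M (pval M) = Tspan M := by
  refine le_antisymm (chain_le_Tspan M _) ?_
  rw [Tspan, Submodule.span_le]
  rintro x ⟨⟨a, b⟩, rfl⟩
  have := range_psi_le_chain_pval M (Pi.single b 1) ⟨Pi.single a 1, rfl⟩
  rwa [psi_apply, Bmap_single] at this

lemma sum_kf (q : ℕ) : ∑ j ∈ Finset.range q, kf M j = finrank ℂ ↥(chain M q) := by
  induction q with
  | zero => rw [Finset.sum_range_zero, show chain M 0 = ⊥ from rfl, finrank_bot]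
  | succ q ih =>
    rw [Finset.sum_range_succ, ih]
    have := finrank_chain_mono M (Nat.le_add_right q 1)
    unfold kf; omega

lemma pval_pos (hK : 1 ≤ finrank ℂ ↥(Tspan M)) : 1 ≤ pval M := by
  by_contra h
  have h0 : pval M = 0 := by omega
  have hc := chain_pval_eq M
  rw [h0] at hc
  have hb : chain M 0 = ⊥ := rfl
  rw [hb] at hc
  rw [← hc, finrank_bot] at hK
  omega

lemma kf_zero_le : kf M 0 ≤ m₁ := by
  have h1 : chain M 1 = LinearMap.range (psi M (wg M 0)) := by
    rw [chain_succ]; simp [chain]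
  have := LinearMap.finrank_range_le (psi M (wg M 0))
  rw [Module.finrank_fin_fun] at this
  unfold kf
  rw [h1]
  have h0 : finrank ℂ ↥(chain M 0) = 0 := by rw [show chain M 0 = ⊥ from rfl, finrank_bot]
  omega

lemma psi_span_mem {q : ℕ} {x : Fin n₁ → ℂ}
    (hx : x ∈ Submodule.span ℂ (Set.range (fun j : Fin q => wg M j))) (u : Fin m₁ → ℂ) :
    psi M x u ∈ chain M q := by
  induction hx using Submodule.span_induction with
  | mem y hy =>
    obtain ⟨j, rfl⟩ := hy
    have h1 : psi M (wg M j) u ∈ LinearMap.range (psi M (wg M j)) := ⟨u, rfl⟩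
    have h2 : LinearMap.range (psi M (wg M (j : ℕ))) ≤ chain M ((j : ℕ) + 1) := by
      rw [chain_succ]; exact le_sup_right
    exact chain_mono M (by omega : (j : ℕ) + 1 ≤ q) (h2 h1)
  | zero => simp
  | add y z _ _ hy hz => rw [map_add, LinearMap.add_apply]; exact Submodule.add_mem _ hy hz
  | smul c y _ hy => rw [_root_.map_smul, LinearMap.smul_apply]; exact Submodule.smul_mem _ c hy

lemma wg_li : LinearIndependent ℂ (fun j : Fin (pval M) => wg M j) := by
  suffices h : ∀ q, q ≤ pval M → LinearIndependent ℂ (fun j : Fin q => wg M j) from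
    h (pval M) le_rfl
  intro q
  induction q with
  | zero => intro _; exact linearIndependent_empty_type
  | succ q ih =>
    intro hq
    have heq : (fun j : Fin (q+1) => wg M (j : ℕ)) =
        Fin.snoc (fun j : Fin q => wg M (j : ℕ)) (wg M q) := by
      funext i
      refine Fin.lastCases ?_ (fun i => ?_) i
      · simp [Fin.snoc_last]
      · simp [Fin.snoc_castSucc]
    rw [heq, linearIndependent_fin_snoc]
    refine ⟨ih (by omega), ?_⟩
    intro hmem
    have hle : LinearMap.range (psi M (wg M q)) ≤ chain M q := by
      rintro y ⟨u, rfl⟩; exact psi_span_mem M hmem u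
    have : chain M (q+1) = chain M q := by
      rw [chain_succ]; exact sup_eq_left.mpr hle
    exact absurd this (ne_of_gt (chain_lt M (by omega)))

lemma pval_le : pval M ≤ n₁ := by
  have := (wg_li M).fintype_card_le_finrank
  simpa [Module.finrank_fin_fun] using this

noncomputable def Lq (j : ℕ) : (Fin m₁ → ℂ) →ₗ[ℂ]
    ((Matrix (Fin m₂) (Fin n₂) ℂ) ⧸ chain M j) :=
  (chain M j).mkQ ∘ₗ psi M (wg M j)

lemma range_Lq (j : ℕ) :
    LinearMap.range (Lq M j) = Submodule.map (chain M j).mkQ (chain M (j+1)) := by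
  rw [Lq, LinearMap.range_comp, chain_succ, Submodule.map_sup]
  have : Submodule.map (chain M j).mkQ (chain M j) = ⊥ := by
    refine le_bot_iff.mp ?_
    rw [Submodule.map_le_iff_le_comap, Submodule.comap_bot, Submodule.ker_mkQ]
  rw [this, bot_sup_eq]

lemma finrank_range_Lq (j : ℕ) : finrank ℂ ↥(LinearMap.range (Lq M j)) = kf M j := by
  rw [range_Lq]
  set f := ((chain M j).mkQ).comp (chain M (j+1)).subtype with hf
  have hr : LinearMap.range f = Submodule.map (chain M j).mkQ (chain M (j+1)) := by
    rw [hf, LinearMap.range_comp, Submodule.range_subtype]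
  have hk : LinearMap.ker f = Submodule.comap (chain M (j+1)).subtype (chain M j) := by
    rw [hf, LinearMap.ker_comp, Submodule.ker_mkQ]
  have hker : finrank ℂ ↥(LinearMap.ker f) = finrank ℂ ↥(chain M j) := by
    rw [hk]
    exact LinearEquiv.finrank_eq (Submodule.comapSubtypeEquivOfLe (chain_le_succ M j))
  have hrn := LinearMap.finrank_range_add_finrank_ker f
  rw [hr, hker] at hrn
  have := finrank_chain_mono M (Nat.le_add_right j 1)
  unfold kf
  omega

noncomputable def Kker (j : ℕ) : Submodule ℂ (Fin m₁ → ℂ) := LinearMap.ker (Lq M j)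

lemma finrank_Kker (j : ℕ) : finrank ℂ ↥(Kker M j) + kf M j = m₁ := by
  have hrn := LinearMap.finrank_range_add_finrank_ker (Lq M j)
  rw [finrank_range_Lq, Module.finrank_fin_fun] at hrn
  rw [Kker]
  omega

lemma kf_le_m₁ (j : ℕ) : kf M j ≤ m₁ := by
  have := finrank_Kker M j; omega

lemma Kker_zero : Kker M 0 = LinearMap.ker (psi M (wg M 0)) := by
  rw [Kker, Lq, LinearMap.ker_comp, Submodule.ker_mkQ]
  have hb : chain M 0 = ⊥ := rfl
  rw [hb]
  rw [Submodule.comap_bot]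

lemma avoid {ι : Type*} [Finite ι] {E : Type*} [AddCommGroup E] [Module ℂ E]
    (p : ι → Submodule ℂ E) (h : ∀ i, p i ≠ ⊤) : ∃ v : E, ∀ i, v ∉ p i := by
  by_contra hc
  push_neg at hc
  have hcov : ⋃ i, ((p i : Set E)) = Set.univ := by
    refine Set.eq_univ_iff_forall.mpr fun v => Set.mem_iUnion.mpr ?_
    obtain ⟨i, hi⟩ := hc v
    exact ⟨i, hi⟩
  obtain ⟨i, hi⟩ := Subspace.exists_eq_top_of_iUnion_eq_univ hcov
  exact h i hi

lemma range_fin_snoc {d : ℕ} {E : Type*} (f : Fin d → E) (x : E) :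
    Set.range (Fin.snoc f x : Fin (d+1) → E) = insert x (Set.range f) := by
  ext y
  constructor
  · rintro ⟨i, rfl⟩
    refine Fin.lastCases ?_ (fun i => ?_) i
    · rw [Fin.snoc_last]; exact Set.mem_insert _ _
    · rw [Fin.snoc_castSucc]; exact Set.mem_insert_of_mem _ ⟨i, rfl⟩
  · rintro (rfl | ⟨i, rfl⟩)
    · exact ⟨Fin.last d, Fin.snoc_last _ _⟩
    · exact ⟨i.castSucc, Fin.snoc_castSucc _ _ _⟩

lemma flag_exists (d : ℕ) (hd : d ≤ kf M 0) :
    ∃ v : ℕ → (Fin m₁ → ℂ), ∀ e, e ≤ d →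
      (LinearIndependent ℂ (fun i : Fin e => v i) ∧
       ∀ j, j < pval M → e ≤ kf M j →
         Submodule.span ℂ (Set.range (fun i : Fin e => v i)) ⊓ Kker M j = ⊥) := by
  induction d with
  | zero =>
    refine ⟨fun _ => 0, fun e he => ?_⟩
    have he0 : e = 0 := by omega
    subst he0
    constructor
    · exact linearIndependent_empty_type
    · intro j _ _
      rw [Set.range_eq_empty, Submodule.span_empty, bot_inf_eq]
  | succ d ih =>
    obtain ⟨v, hv⟩ := ih (by omega)
    -- pick a new vector avoiding the relevant subspaces
    have hm : 1 ≤ m₁ := le_trans (le_trans (by omega) hd) (kf_le_m₁ M 0)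
    set P : Submodule ℂ (Fin m₁ → ℂ) :=
      Submodule.span ℂ (Set.range (fun i : Fin d => v i)) with hP
    have hPfin : finrank ℂ ↥P ≤ d := by
      rw [hP]; simpa [Set.finrank] using finrank_range_le_card (R := ℂ) (fun i : Fin d => v i)
    have hx : ∃ x : Fin m₁ → ℂ, ∀ j : Fin (pval M),
        x ∉ (if d < kf M j then P ⊔ Kker M (j : ℕ) else ⊥) := by
      refine avoid _ fun j => ?_
      split_ifs with hj
      · intro htop
        have h1 : finrank ℂ ↥(P ⊔ Kker M (j : ℕ)) ≤
            finrank ℂ ↥P + finrank ℂ ↥(Kker M (j : ℕ)) := by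
          have := Submodule.finrank_sup_add_finrank_inf_eq P (Kker M (j : ℕ))
          omega
        have h2 := finrank_Kker M (j : ℕ)
        rw [htop, finrank_top, Module.finrank_fin_fun] at h1
        omega
      · intro htop
        have : finrank ℂ (Fin m₁ → ℂ) = 0 := by
          rw [← finrank_top ℂ (Fin m₁ → ℂ), ← htop, finrank_bot]
        rw [Module.finrank_fin_fun] at this
        omega
    obtain ⟨x, hxav⟩ := hx
    have hxav' : ∀ j : ℕ, j < pval M → d < kf M j → x ∉ P ⊔ Kker M j := by
      intro j hj hdj
      have := hxav ⟨j, hj⟩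
      rwa [if_pos hdj] at this
    refine ⟨fun i => if i = d then x else v i, fun e he => ?_⟩
    rcases Nat.lt_or_ge e (d+1) with he' | he'
    · -- e ≤ d : same as before
      have heq : (fun i : Fin e => if (i : ℕ) = d then x else v i) =
          (fun i : Fin e => v i) := by
        funext i
        rw [if_neg (by omega)]
      rw [heq]
      exact hv e (by omega)
    · -- e = d + 1
      have he2 : e = d + 1 := by omega
      subst he2
      have heq : (fun i : Fin (d+1) => if (i : ℕ) = d then x else v i) =
          Fin.snoc (fun i : Fin d => v i) x := by
        funext i
        refine Fin.lastCases ?_ (fun i => ?_) i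
        · rw [Fin.snoc_last]; simp
        · rw [Fin.snoc_castSucc, Fin.coe_castSucc, if_neg (by omega)]
      rw [heq]
      have hd0 : 0 < pval M := by
        by_contra h0
        have : kf M 0 ≥ d + 1 := hd
        have hp0 : pval M = 0 := by omega
        -- kf M 0 ≥ 1 means chain 0 ≠ chain 1, contradicting pval = 0
        have hstab : chain M 1 = chain M 0 := by
          have hsp : chain M (pval M + 1) = chain M (pval M) := Nat.find_spec (exists_stab M)
          rwa [hp0] at hsp
        have : kf M 0 = 0 := by unfold kf; rw [hstab]; omega
        omega
      have hxP : x ∉ P := fun hxp =>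
        hxav' 0 hd0 (by omega) (Submodule.mem_sup_left hxp)
      constructor
      · rw [linearIndependent_fin_snoc]
        exact ⟨(hv d le_rfl).1, by rwa [← hP]⟩
      · intro j hj hkj
        rw [range_fin_snoc, Submodule.span_insert, ← hP]
        rw [eq_bot_iff]
        intro z hz
        obtain ⟨hz1, hz2⟩ := Submodule.mem_inf.mp hz
        rw [Submodule.mem_sup] at hz1
        obtain ⟨y1, hy1, y2, hy2, rfl⟩ := hz1
        rw [Submodule.mem_span_singleton] at hy1
        obtain ⟨t, rfl⟩ := hy1
        by_cases ht : t = 0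
        · subst ht
          rw [zero_smul, zero_add] at hz2 ⊢
          have := (hv d le_rfl).2 j hj (by omega)
          have : y2 ∈ Submodule.span ℂ (Set.range fun i : Fin d => v i) ⊓ Kker M j :=
            ⟨hy2, hz2⟩
          rw [(hv d le_rfl).2 j hj (by omega)] at this
          simpa using this
        · exfalso
          apply hxav' j hj (by omega)
          have hxeq : x = t⁻¹ • ((t • x + y2) - y2) := by
            rw [add_sub_cancel_right, smul_smul, inv_mul_cancel₀ ht, one_smul]
          rw [hxeq]
          refine Submodule.smul_mem _ _ (Submodule.sub_mem _ ?_ ?_)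
          · exact Submodule.mem_sup_right hz2
          · exact Submodule.mem_sup_left hy2

lemma col_span (v : ℕ → Fin m₁ → ℂ) {j : ℕ}
    (hli : LinearIndependent ℂ (fun i : Fin (kf M j) => v i))
    (hdisj : Submodule.span ℂ (Set.range fun i : Fin (kf M j) => v i) ⊓ Kker M j = ⊥) :
    chain M j ⊔ Submodule.span ℂ (Set.range fun i : Fin (kf M j) => psi M (wg M j) (v i)) =
      chain M (j+1) := by
  set L := Lq M j with hL
  set fam := fun i : Fin (kf M j) => v i with hfam
  have hdis : Disjoint (Submodule.span ℂ (Set.range fam)) (LinearMap.ker L) := by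
    rw [disjoint_iff]
    exact hdisj
  have hli2 : LinearIndependent ℂ (L ∘ fam) := hli.map hdis
  have hcard : finrank ℂ ↥(Submodule.span ℂ (Set.range (L ∘ fam))) = kf M j := by
    rw [finrank_span_eq_card hli2, Fintype.card_fin]
  have hle : Submodule.span ℂ (Set.range (L ∘ fam)) ≤ LinearMap.range L := by
    rw [Submodule.span_le]
    rintro y ⟨i, rfl⟩
    exact ⟨fam i, rfl⟩
  have heq : Submodule.span ℂ (Set.range (L ∘ fam)) = LinearMap.range L :=
    Submodule.eq_of_le_of_finrank_le hle (by rw [hcard, finrank_range_Lq])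
  have hcomp : Submodule.span ℂ (Set.range (L ∘ fam)) =
      Submodule.map (chain M j).mkQ
        (Submodule.span ℂ (Set.range fun i : Fin (kf M j) => psi M (wg M j) (v i))) := by
    have : L ∘ fam = (chain M j).mkQ ∘ (fun i : Fin (kf M j) => psi M (wg M j) (v i)) := rfl
    rw [this, Set.range_comp, Submodule.span_image]
  have hmain : Submodule.map (chain M j).mkQ
      (Submodule.span ℂ (Set.range fun i : Fin (kf M j) => psi M (wg M j) (v i))) =
      Submodule.map (chain M j).mkQ (chain M (j+1)) := by
    rw [← hcomp, heq, range_Lq]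
  have := congrArg (Submodule.comap (chain M j).mkQ) hmain
  rw [Submodule.comap_map_mkQ, Submodule.comap_map_mkQ] at this
  rw [this, sup_eq_right.mpr (chain_le_succ M j)]

def stairSet (v : ℕ → Fin m₁ → ℂ) (q : ℕ) : Set (Matrix (Fin m₂) (Fin n₂) ℂ) :=
  {y | ∃ a b : ℕ, b < q ∧ a < kf M b ∧ y = psi M (wg M b) (v a)}

lemma chain_le_stair (v : ℕ → Fin m₁ → ℂ)
    (hcol : ∀ j, j < pval M →
      chain M j ⊔ Submodule.span ℂ (Set.range fun i : Fin (kf M j) => psi M (wg M j) (v i)) =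
        chain M (j+1)) :
    ∀ q, q ≤ pval M → chain M q ≤ Submodule.span ℂ (stairSet M v q) := by
  intro q
  induction q with
  | zero => intro _; exact bot_le
  | succ q ih =>
    intro hq
    rw [← hcol q (by omega)]
    refine sup_le (le_trans (ih (by omega)) (Submodule.span_mono ?_)) ?_
    · rintro y ⟨a, b, hb, ha, rfl⟩
      exact ⟨a, b, by omega, ha, rfl⟩
    · rw [Submodule.span_le]
      rintro y ⟨i, rfl⟩
      exact Submodule.subset_span ⟨i, q, by omega, i.2, rfl⟩

lemma stair_le_chain (v : ℕ → Fin m₁ → ℂ) (q : ℕ) :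
    stairSet M v q ⊆ ↑(chain M q) := by
  rintro y ⟨a, b, hb, ha, rfl⟩
  have h1 : psi M (wg M b) (v a) ∈ LinearMap.range (psi M (wg M b)) := ⟨v a, rfl⟩
  have h2 : LinearMap.range (psi M (wg M b)) ≤ chain M (b+1) := by
    rw [chain_succ]; exact le_sup_right
  exact chain_mono M (by omega : b + 1 ≤ q) (h2 h1)

lemma blockOf_conj (U : Matrix (Fin m₁) (Fin m₁) ℂ) (W : Matrix (Fin n₁) (Fin n₁) ℂ)
    (i : Fin m₁) (j : Fin n₁) :
    blockOf ((U ⊗ₖ (1 : Matrix (Fin m₂) (Fin m₂) ℂ)) * M *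
        (W ⊗ₖ (1 : Matrix (Fin n₂) (Fin n₂) ℂ))) i j =
      Bmap M (fun a => U i a) (fun b => W b j) := by
  ext k l
  simp only [blockOf, Bmap_apply, Matrix.of_apply, Matrix.mul_apply,
    Matrix.kroneckerMap_apply, Matrix.one_apply, Matrix.sum_apply, Matrix.smul_apply,
    smul_eq_mul, Fintype.sum_prod_type, mul_ite, ite_mul, mul_zero, zero_mul, mul_one,
    one_mul, Finset.sum_ite_eq, Finset.sum_ite_eq', Finset.mem_univ, if_true]
  rw [Finset.sum_comm]
  exact Finset.sum_congr rfl fun b _ => by rw [Finset.sum_mul]; exact Finset.sum_congr rfl fun a _ => by ring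

end ThmAux

/-- Theorem 3 (canonical form under local equivalence): every bipartite matrix `M` of
Schmidt rank `K ≥ 1` is locally equivalent to a matrix `N = (U ⊗ₖ V) * M * (W ⊗ₖ X)`
admitting a staircase block structure: for some `1 ≤ p ≤ n₁` and
`m₁ ≥ k₀ ≥ k₁ ≥ ⋯ ≥ k_{p-1} ≥ 1` with `k₀ + ⋯ + k_{p-1} = K`, the blocks
`{N_{i,j} : j < p, i < k_j}` are linearly independent, the blocks `N_{i,0}` with
`i ≥ k₀` vanish, and every block `N_{i,j}` lies in the span of
`{N_{a,b} : b ≤ min (j, p-1), a < k_b}`. -/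
theorem exists_canonical_form_local_equivalence
    {m₁ m₂ n₁ n₂ : ℕ} (hm₁ : 1 ≤ m₁) (hm₂ : 1 ≤ m₂) (hn₁ : 1 ≤ n₁) (hn₂ : 1 ≤ n₂)
    (M : Matrix (Fin m₁ × Fin m₂) (Fin n₁ × Fin n₂) ℂ)
    (hK : 1 ≤ schmidtRank M) :
    ∃ (U : Matrix (Fin m₁) (Fin m₁) ℂ) (V : Matrix (Fin m₂) (Fin m₂) ℂ)
      (W : Matrix (Fin n₁) (Fin n₁) ℂ) (X : Matrix (Fin n₂) (Fin n₂) ℂ),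
      IsUnit U ∧ IsUnit V ∧ IsUnit W ∧ IsUnit X ∧
      ∃ (p : ℕ) (k : ℕ → ℕ) (hp : 1 ≤ p) (hpn : p ≤ n₁)
        (hmono : ∀ i j : ℕ, i ≤ j → j < p → k j ≤ k i)
        (hone : ∀ j : ℕ, j < p → 1 ≤ k j)
        (hk₀ : k 0 ≤ m₁),
        (∑ j ∈ Finset.range p, k j) = schmidtRank M ∧
        ∃ N : Matrix (Fin m₁ × Fin m₂) (Fin n₁ × Fin n₂) ℂ,
          N = (U ⊗ₖ V) * M * (W ⊗ₖ X) ∧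
          -- (a) the staircase blocks are linearly independent
          (LinearIndependent ℂ
            (fun q : {q : ℕ × ℕ // q.1 < p ∧ q.2 < k q.1} =>
              blockOf N
                ⟨q.1.2, lt_of_lt_of_le q.2.2
                  (le_trans (hmono 0 q.1.1 (Nat.zero_le _) q.2.1) hk₀)⟩
                ⟨q.1.1, lt_of_lt_of_le q.2.1 hpn⟩)) ∧
          -- (b) the first block-column vanishes below row `k₀`
          (∀ i : Fin m₁, k 0 ≤ i.val → blockOf N i ⟨0, by omega⟩ = 0) ∧
          -- (c) every block lies in the span of the staircase blocks to its left
          (∀ (i : Fin m₁) (j : Fin n₁),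
            blockOf N i j ∈ Submodule.span ℂ
              {Y : Matrix (Fin m₂) (Fin n₂) ℂ |
                ∃ (a : Fin m₁) (b : Fin n₁),
                  b.val ≤ min j.val (p - 1) ∧ a.val < k b.val ∧
                  Y = blockOf N a b}) := by
  classical
  open ThmAux in
  have hT : 1 ≤ finrank ℂ ↥(Tspan M) := hK
  have hp : 1 ≤ pval M := pval_pos M hT
  have hpn : pval M ≤ n₁ := pval_le M
  have hmono : ∀ i j : ℕ, i ≤ j → j < pval M → kf M j ≤ kf M i :=
    fun i j hij _ => kf_mono M hij
  have hone : ∀ j : ℕ, j < pval M → 1 ≤ kf M j := fun j hj => kf_pos M hj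
  have hk₀ : kf M 0 ≤ m₁ := kf_zero_le M
  -- the flag of row vectors
  obtain ⟨v, hv⟩ := flag_exists M (kf M 0) le_rfl
  have h_rk_K0 : finrank ℂ ↥(Kker M 0) = m₁ - kf M 0 := by
    have := finrank_Kker M 0; omega
  let basisK : Basis (Fin (m₁ - kf M 0)) ℂ ↥(Kker M 0) :=
    Module.finBasisOfFinrankEq ℂ _ h_rk_K0
  have hik : ∀ i : Fin m₁, ¬((i : ℕ) < kf M 0) → (i : ℕ) - kf M 0 < m₁ - kf M 0 :=
    fun i h => by have := i.2; omega
  set ufam : Fin m₁ → (Fin m₁ → ℂ) := fun i =>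
    if h : (i : ℕ) < kf M 0 then v i
    else (basisK ⟨(i : ℕ) - kf M 0, hik i h⟩ : Fin m₁ → ℂ)
    with hufam
  have hufam_lt : ∀ (i : Fin m₁), (i:ℕ) < kf M 0 → ufam i = v i := by
    intro i h; simp only [hufam]; rw [dif_pos h]
  have hufam_ge : ∀ (i : Fin m₁), ¬((i:ℕ) < kf M 0) → ufam i ∈ Kker M 0 := by
    intro i h; simp only [hufam]; rw [dif_neg h]; exact (basisK _).2
  have hspan0 := (hv (kf M 0) le_rfl).2 0 hp le_rfl
  have huli : LinearIndependent ℂ ufam := by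
    let e : (Fin (kf M 0) ⊕ Fin (m₁ - kf M 0)) ≃ Fin m₁ :=
      finSumFinEquiv.trans (finCongr (by omega))
    have hright : LinearIndependent ℂ
        (fun i : Fin (m₁ - kf M 0) => (basisK i : Fin m₁ → ℂ)) :=
      basisK.linearIndependent.map' (Kker M 0).subtype (Submodule.ker_subtype _)
    have hspanR : Submodule.span ℂ (Set.range fun i : Fin (m₁ - kf M 0) =>
        (basisK i : Fin m₁ → ℂ)) = Kker M 0 := by
      have hcc : (fun i : Fin (m₁ - kf M 0) => (basisK i : Fin m₁ → ℂ)) =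
          (Kker M 0).subtype ∘ basisK := rfl
      rw [hcc, Set.range_comp, Submodule.span_image, basisK.span_eq,
        Submodule.map_subtype_top]
    have hdisj : Disjoint (Submodule.span ℂ (Set.range fun i : Fin (kf M 0) => v i))
        (Submodule.span ℂ (Set.range fun i : Fin (m₁ - kf M 0) =>
          (basisK i : Fin m₁ → ℂ))) := by
      rw [hspanR, disjoint_iff]
      exact hspan0
    have hsumli := LinearIndependent.sum_type (hv (kf M 0) le_rfl).1 hright hdisj
    have hfe : ufam ∘ e = Sum.elim (fun i : Fin (kf M 0) => v i)
        (fun i : Fin (m₁ - kf M 0) => (basisK i : Fin m₁ → ℂ)) := by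
      funext x
      cases x with
      | inl i =>
        have hval : ((e (Sum.inl i) : Fin m₁) : ℕ) = (i : ℕ) := by
          simp [e, finSumFinEquiv]
        simp only [Function.comp_apply, Sum.elim_inl, hufam]
        rw [dif_pos (by rw [hval]; exact i.2), hval]
      | inr i =>
        have hval : ((e (Sum.inr i) : Fin m₁) : ℕ) = kf M 0 + (i : ℕ) := by
          simp [e, finSumFinEquiv]
        simp only [Function.comp_apply, Sum.elim_inr, hufam]
        rw [dif_neg (by omega)]
        congr 1
        ext
        simp [hval]
    exact (linearIndependent_equiv' e hfe).mp hsumli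
  haveI : Nonempty (Fin m₁) := ⟨⟨0, by omega⟩⟩
  let ubasis : Basis (Fin m₁) ℂ (Fin m₁ → ℂ) :=
    basisOfLinearIndependentOfCardEqFinrank huli
      (by rw [Fintype.card_fin, Module.finrank_fin_fun])
  have hubasis : ⇑ubasis = ufam := coe_basisOfLinearIndependentOfCardEqFinrank _ _
  set U : Matrix (Fin m₁) (Fin m₁) ℂ :=
    ((Pi.basisFun ℂ (Fin m₁)).toMatrix ubasis)ᵀ with hUdef
  have hUapp : ∀ i a, U i a = ufam i a := by
    intro i a
    rw [hUdef, Matrix.transpose_apply, Basis.toMatrix_apply, Pi.basisFun_repr, hubasis]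
  have hUunit : IsUnit U := by
    letI := (Pi.basisFun ℂ (Fin m₁)).invertibleToMatrix ubasis
    rw [hUdef, Matrix.isUnit_iff_isUnit_det, Matrix.det_transpose,
      ← Matrix.isUnit_iff_isUnit_det]
    exact isUnit_of_invertible _
  -- the column vectors
  obtain ⟨Q, hQ⟩ := Submodule.exists_isCompl
    (Submodule.span ℂ (Set.range fun j : Fin (pval M) => wg M j))
  have hrkW : finrank ℂ ↥(Submodule.span ℂ
      (Set.range fun j : Fin (pval M) => wg M j)) = pval M := by
    rw [finrank_span_eq_card (wg_li M), Fintype.card_fin]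
  have hrkQ : finrank ℂ ↥Q = n₁ - pval M := by
    have := Submodule.finrank_add_eq_of_isCompl hQ
    rw [hrkW, Module.finrank_fin_fun] at this
    omega
  let basisQ : Basis (Fin (n₁ - pval M)) ℂ ↥Q := Module.finBasisOfFinrankEq ℂ _ hrkQ
  have hjq : ∀ j : Fin n₁, ¬((j : ℕ) < pval M) → (j : ℕ) - pval M < n₁ - pval M :=
    fun j h => by have := j.2; omega
  set wfam : Fin n₁ → (Fin n₁ → ℂ) := fun j =>
    if h : (j : ℕ) < pval M then wg M j
    else (basisQ ⟨(j : ℕ) - pval M, hjq j h⟩ : Fin n₁ → ℂ)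
    with hwfam
  have hwfam_lt : ∀ (j : Fin n₁), (j:ℕ) < pval M → wfam j = wg M (j : ℕ) := by
    intro j h; simp only [hwfam]; rw [dif_pos h]
  have hwli : LinearIndependent ℂ wfam := by
    let e : (Fin (pval M) ⊕ Fin (n₁ - pval M)) ≃ Fin n₁ :=
      finSumFinEquiv.trans (finCongr (by omega))
    have hright : LinearIndependent ℂ
        (fun i : Fin (n₁ - pval M) => (basisQ i : Fin n₁ → ℂ)) :=
      basisQ.linearIndependent.map' Q.subtype (Submodule.ker_subtype _)
    have hspanR : Submodule.span ℂ (Set.range fun i : Fin (n₁ - pval M) =>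
        (basisQ i : Fin n₁ → ℂ)) = Q := by
      have hcc : (fun i : Fin (n₁ - pval M) => (basisQ i : Fin n₁ → ℂ)) =
          Q.subtype ∘ basisQ := rfl
      rw [hcc, Set.range_comp, Submodule.span_image, basisQ.span_eq,
        Submodule.map_subtype_top]
    have hdisj : Disjoint
        (Submodule.span ℂ (Set.range fun j : Fin (pval M) => wg M j))
        (Submodule.span ℂ (Set.range fun i : Fin (n₁ - pval M) =>
          (basisQ i : Fin n₁ → ℂ))) := by
      rw [hspanR]
      exact hQ.disjoint
    have hsumli := LinearIndependent.sum_type (wg_li M) hright hdisj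
    have hfe : wfam ∘ e = Sum.elim (fun j : Fin (pval M) => wg M j)
        (fun i : Fin (n₁ - pval M) => (basisQ i : Fin n₁ → ℂ)) := by
      funext x
      cases x with
      | inl i =>
        have hval : ((e (Sum.inl i) : Fin n₁) : ℕ) = (i : ℕ) := by
          simp [e, finSumFinEquiv]
        simp only [Function.comp_apply, Sum.elim_inl, hwfam]
        rw [dif_pos (by rw [hval]; exact i.2), hval]
      | inr i =>
        have hval : ((e (Sum.inr i) : Fin n₁) : ℕ) = pval M + (i : ℕ) := by
          simp [e, finSumFinEquiv]
        simp only [Function.comp_apply, Sum.elim_inr, hwfam]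
        rw [dif_neg (by omega)]
        congr 1
        ext
        simp [hval]
    exact (linearIndependent_equiv' e hfe).mp hsumli
  haveI : Nonempty (Fin n₁) := ⟨⟨0, by omega⟩⟩
  let wbasis : Basis (Fin n₁) ℂ (Fin n₁ → ℂ) :=
    basisOfLinearIndependentOfCardEqFinrank hwli
      (by rw [Fintype.card_fin, Module.finrank_fin_fun])
  have hwbasis : ⇑wbasis = wfam := coe_basisOfLinearIndependentOfCardEqFinrank _ _
  set W : Matrix (Fin n₁) (Fin n₁) ℂ :=
    (Pi.basisFun ℂ (Fin n₁)).toMatrix wbasis with hWdef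
  have hWapp : ∀ b j, W b j = wfam j b := by
    intro b j
    rw [hWdef, Basis.toMatrix_apply, Pi.basisFun_repr, hwbasis]
  have hWunit : IsUnit W := by
    letI := (Pi.basisFun ℂ (Fin n₁)).invertibleToMatrix wbasis
    exact isUnit_of_invertible _
  -- the transformed matrix and its blocks
  set N := (U ⊗ₖ (1 : Matrix (Fin m₂) (Fin m₂) ℂ)) * M *
    (W ⊗ₖ (1 : Matrix (Fin n₂) (Fin n₂) ℂ)) with hNdef
  have hblock : ∀ i j, blockOf N i j = psi M (wfam j) (ufam i) := by
    intro i j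
    have h1 : (fun a => U i a) = ufam i := funext fun a => hUapp i a
    have h2 : (fun b => W b j) = wfam j := funext fun b => hWapp b j
    rw [hNdef, blockOf_conj, psi_apply, h1, h2]
  -- per-column spanning
  have hcol : ∀ j, j < pval M →
      chain M j ⊔ Submodule.span ℂ
        (Set.range fun i : Fin (kf M j) => psi M (wg M j) (v i)) = chain M (j+1) := by
    intro j hj
    have hkj : kf M j ≤ kf M 0 := kf_mono M (Nat.zero_le j)
    exact col_span M v ((hv (kf M j) hkj).1) ((hv (kf M j) hkj).2 j hj le_rfl)
  have hstair := chain_le_stair M v hcol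
  refine ⟨U, 1, W, 1, hUunit, isUnit_one, hWunit, isUnit_one,
    pval M, kf M, hp, hpn, hmono, hone, hk₀, ?_, N, ?_, ?_, ?_, ?_⟩
  · -- sum of k's
    rw [sum_kf M (pval M), chain_pval_eq]
    rfl
  · -- N equation
    exact hNdef
  · -- (a) linear independence
    let σ := Σ j : Fin (pval M), Fin (kf M j)
    let g : σ → Matrix (Fin m₂) (Fin n₂) ℂ :=
      fun s => psi M (wg M (s.1 : ℕ)) (v (s.2 : ℕ))
    have hgli : LinearIndependent ℂ g := by
      rw [linearIndependent_iff_card_eq_finrank_span]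
      have hspan : Submodule.span ℂ (Set.range g) = chain M (pval M) := by
        refine le_antisymm ?_ ?_
        · rw [Submodule.span_le]
          rintro y ⟨s, rfl⟩
          exact stair_le_chain M v (pval M) ⟨(s.2 : ℕ), (s.1 : ℕ), s.1.2, s.2.2, rfl⟩
        · refine le_trans (hstair (pval M) le_rfl) (Submodule.span_mono ?_)
          rintro y ⟨a, b, hb, ha, rfl⟩
          exact ⟨⟨⟨b, hb⟩, ⟨a, ha⟩⟩, rfl⟩
      have hcard : Fintype.card σ = ∑ j ∈ Finset.range (pval M), kf M j := by
        rw [Fintype.card_sigma]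
        simp only [Fintype.card_fin]
        rw [Fin.sum_univ_eq_sum_range]
      rw [Set.finrank, hspan, hcard, sum_kf M (pval M)]
    let e : σ ≃ {q : ℕ × ℕ // q.1 < pval M ∧ q.2 < kf M q.1} :=
      { toFun := fun s => ⟨((s.1 : ℕ), (s.2 : ℕ)), ⟨s.1.2, s.2.2⟩⟩
        invFun := fun q => ⟨⟨q.1.1, q.2.1⟩, ⟨q.1.2, q.2.2⟩⟩
        left_inv := fun s => rfl
        right_inv := fun q => by rcases q with ⟨⟨a, b⟩, ⟨h1, h2⟩⟩; rfl }
    refine (linearIndependent_equiv' e ?_).mp hgli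
    funext s
    simp only [Function.comp_apply]
    rw [hblock]
    rw [hwfam_lt _ (e s).2.1, hufam_lt _
      (lt_of_lt_of_le (e s).2.2 (kf_mono M (Nat.zero_le _)))]
    rfl
  · -- (b) vanishing
    intro i hi
    rw [hblock]
    rw [hwfam_lt _ (by show 0 < pval M; omega)]
    have hmem : ufam i ∈ Kker M 0 := hufam_ge i (by omega)
    rw [Kker_zero] at hmem
    exact hmem
  · -- (c) span condition
    intro i j
    rw [hblock]
    have hq1 : min (j : ℕ) (pval M - 1) + 1 ≤ pval M := by omega
    have h1 : psi M (wfam j) (ufam i) ∈ chain M (min (j : ℕ) (pval M - 1) + 1) := by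
      by_cases hjp : (j : ℕ) < pval M
      · rw [hwfam_lt _ hjp]
        have hm1 : psi M (wg M (j : ℕ)) (ufam i) ∈
            LinearMap.range (psi M (wg M (j : ℕ))) := ⟨ufam i, rfl⟩
        have h2 : LinearMap.range (psi M (wg M (j : ℕ))) ≤ chain M ((j : ℕ) + 1) := by
          rw [chain_succ]; exact le_sup_right
        exact chain_mono M (by omega : (j : ℕ) + 1 ≤ min (j : ℕ) (pval M - 1) + 1)
          (h2 hm1)
      · have hq : min (j : ℕ) (pval M - 1) + 1 = pval M := by omega
        rw [hq]
        exact range_psi_le_chain_pval M (wfam j) ⟨ufam i, rfl⟩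
    have h2 := hstair (min (j : ℕ) (pval M - 1) + 1) hq1
    refine Submodule.span_mono ?_ (h2 h1)
    rintro y ⟨a, b, hb, ha, rfl⟩
    have hbp : b < pval M := by omega
    have hak : a < kf M 0 := lt_of_lt_of_le ha (kf_mono M (Nat.zero_le b))
    refine ⟨⟨a, by omega⟩, ⟨b, by omega⟩, by simpa using (by omega : b ≤ min (j : ℕ) (pval M - 1)), ?_, ?_⟩
    · simpa using ha
    · rw [hblock]
      rw [hwfam_lt _ (by simpa using hbp), hufam_lt _ (by simpa using hak)]
end

section
/- For every n ≥ 1 and every positive semidefinite n-partite matrix ρ, the product of the ranks of all single-party reduced matrices bounds the rank of ρ: ∏_{j : Fin n} r(ρ_{{j}}) ≥ r(ρ). -/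
open Matrix
open scoped ComplexOrder

/-- Combine a function defined on `S` with a function defined on its complement. -/
def glue {n : ℕ} {A : Fin n → Type*} (S : Finset (Fin n))
    (x : ∀ i : {i // i ∈ S}, A i.val) (z : ∀ i : {i // i ∉ S}, A i.val) :
    ∀ i, A i :=
  fun i => if h : i ∈ S then x ⟨i, h⟩ else z ⟨i, h⟩

/-- The reduced matrix (partial trace over the complement of `S`) of an `n`-partite
matrix. -/
noncomputable def reduceMat {n : ℕ} {A : Fin n → Type*} [∀ i, Fintype (A i)]
    (ρ : Matrix (∀ i, A i) (∀ i, A i) ℂ) (S : Finset (Fin n)) :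
    Matrix (∀ i : {i // i ∈ S}, A i.val) (∀ i : {i // i ∈ S}, A i.val) ℂ :=
  Matrix.of fun x y =>
    ∑ z : ∀ i : {i // i ∉ S}, A i.val, ρ (glue S x z) (glue S y z)

open scoped Kronecker
set_option linter.unusedSectionVars false

open scoped MatrixOrder in
/-- square root of a positive semidefinite matrix (replacement for the removed API) -/
noncomputable def Matrix.PosSemidef.sqrt {m : Type*} [Fintype m] [DecidableEq m]
    {M : Matrix m m ℂ} (_hM : M.PosSemidef) : Matrix m m ℂ := CFC.sqrt M

open scoped MatrixOrder in
lemma Matrix.PosSemidef.sqrt_mul_self {m : Type*} [Fintype m] [DecidableEq m]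
    {M : Matrix m m ℂ} (hM : M.PosSemidef) : hM.sqrt * hM.sqrt = M :=
  CFC.sqrt_mul_sqrt_self M hM.nonneg

open scoped MatrixOrder in
lemma Matrix.PosSemidef.posSemidef_sqrt {m : Type*} [Fintype m] [DecidableEq m]
    {M : Matrix m m ℂ} (hM : M.PosSemidef) : hM.sqrt.PosSemidef :=
  (CFC.sqrt_nonneg M).posSemidef

namespace PRSP

section Generic
set_option linter.unusedSectionVars false
variable {κ ζ : Type*} [Fintype κ] [DecidableEq κ] [Fintype ζ] [DecidableEq ζ]

/-- partial trace over the second factor -/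
noncomputable def pt (M : Matrix (κ × ζ) (κ × ζ) ℂ) : Matrix κ κ ℂ :=
  Matrix.of fun x y => ∑ z : ζ, M (x, z) (y, z)

lemma trace_psd_zero {m : Type*} [Fintype m] [DecidableEq m] {M : Matrix m m ℂ}
    (hM : M.PosSemidef) (h : M.trace = 0) : M = 0 := by
  have hG : hM.sqrt * hM.sqrt = M := hM.sqrt_mul_self
  have hGH : hM.sqrt.conjTranspose = hM.sqrt := hM.posSemidef_sqrt.isHermitian
  have h0 : (hM.sqrtᴴ * hM.sqrt).trace = 0 := by rw [hGH, hG, h]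
  have hz : hM.sqrt = 0 := by
    have hterm : ∀ j : m, (hM.sqrtᴴ * hM.sqrt) j j =
        dotProduct (star fun i => hM.sqrt i j) (fun i => hM.sqrt i j) := by
      intro j
      simp [mul_apply, dotProduct, conjTranspose_apply]
    have hnn : ∀ j : m, 0 ≤ (hM.sqrtᴴ * hM.sqrt) j j := by
      intro j; rw [hterm j]; exact dotProduct_star_self_nonneg _
    have hdiag : ∀ j : m, (hM.sqrtᴴ * hM.sqrt) j j = 0 := by
      intro j
      have := (Fintype.sum_eq_zero_iff_of_nonneg hnn).mp h0
      exact congrFun this j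
    ext i j
    have := hdiag j
    rw [hterm j] at this
    have := dotProduct_star_self_eq_zero.mp this
    simpa using congrFun this i
  rw [← hG, hz, Matrix.mul_zero]

lemma kron_one_conjTranspose (Q : Matrix κ κ ℂ) :
    (Q ⊗ₖ (1 : Matrix ζ ζ ℂ))ᴴ = Qᴴ ⊗ₖ (1 : Matrix ζ ζ ℂ) := by
  ext ⟨a, b⟩ ⟨c, d⟩
  by_cases h : b = d <;>
    simp [conjTranspose_apply, kroneckerMap_apply, Matrix.one_apply, h, eq_comm]

lemma trace_mul_kron_one (M : Matrix (κ × ζ) (κ × ζ) ℂ) (X : Matrix κ κ ℂ) :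
    (M * (X ⊗ₖ (1 : Matrix ζ ζ ℂ))).trace = (pt M * X).trace := by
  have hdiag : ∀ (x : κ) (z : ζ), (M * (X ⊗ₖ (1 : Matrix ζ ζ ℂ))) (x, z) (x, z) =
      ∑ y : κ, M (x, z) (y, z) * X y x := by
    intro x z
    rw [mul_apply, Fintype.sum_prod_type]
    refine Finset.sum_congr rfl fun y _ => ?_
    simp [kroneckerMap_apply, Matrix.one_apply, mul_ite, mul_one, mul_zero,
      Finset.sum_ite_eq', mul_comm]
  calc (M * (X ⊗ₖ (1 : Matrix ζ ζ ℂ))).trace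
      = ∑ x : κ, ∑ z : ζ, ∑ y : κ, M (x, z) (y, z) * X y x := by
        simp only [Matrix.trace, Matrix.diag, Fintype.sum_prod_type]
        exact Finset.sum_congr rfl fun x _ => Finset.sum_congr rfl fun z _ => hdiag x z
    _ = ∑ x : κ, ∑ y : κ, ∑ z : ζ, M (x, z) (y, z) * X y x :=
        Finset.sum_congr rfl fun x _ => Finset.sum_comm
    _ = (pt M * X).trace := by
        simp only [Matrix.trace, Matrix.diag, mul_apply, pt, Matrix.of_apply, Finset.sum_mul]

lemma key (M : Matrix (κ × ζ) (κ × ζ) ℂ) (hM : M.PosSemidef) (P : Matrix κ κ ℂ)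
    (hP : Pᴴ = P) (hPP : P * P = P) (hker : P * pt M = pt M) :
    (P ⊗ₖ (1 : Matrix ζ ζ ℂ)) * M = M := by
  set Q : Matrix κ κ ℂ := 1 - P with hQdef
  have hQH : Qᴴ = Q := by rw [hQdef, conjTranspose_sub, conjTranspose_one, hP]
  have hQQ : Q * Q = Q := by
    simp only [hQdef, Matrix.sub_mul, Matrix.mul_sub, Matrix.mul_one, Matrix.one_mul, hPP]
    abel
  have hQker : Q * pt M = 0 := by
    rw [hQdef, Matrix.sub_mul, Matrix.one_mul, hker, sub_self]
  set QI : Matrix (κ × ζ) (κ × ζ) ℂ := Q ⊗ₖ (1 : Matrix ζ ζ ℂ) with hQIdef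
  have hQIH : QIᴴ = QI := by rw [hQIdef, kron_one_conjTranspose, hQH]
  have hQIQI : QI * QI = QI := by
    rw [hQIdef, ← Matrix.mul_kronecker_mul, hQQ, Matrix.one_mul]
  have hNpsd : (QI * M * QI).PosSemidef := by
    have := hM.mul_mul_conjTranspose_same QI
    rwa [hQIH] at this
  have hNtr : (QI * M * QI).trace = 0 := by
    rw [Matrix.trace_mul_cycle, hQIQI, Matrix.trace_mul_comm, hQIdef,
      trace_mul_kron_one, Matrix.trace_mul_comm, hQker, Matrix.trace_zero]
  have hN : QI * M * QI = 0 := trace_psd_zero hNpsd hNtr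
  -- derive QI * M = 0
  have hG : hM.sqrt * hM.sqrt = M := hM.sqrt_mul_self
  have hGH : hM.sqrtᴴ = hM.sqrt := hM.posSemidef_sqrt.isHermitian
  have hX : (hM.sqrt * QI)ᴴ * (hM.sqrt * QI) = 0 := by
    rw [conjTranspose_mul, hGH, hQIH]
    calc QI * hM.sqrt * (hM.sqrt * QI) = QI * (hM.sqrt * hM.sqrt) * QI := by
          rw [Matrix.mul_assoc, Matrix.mul_assoc, Matrix.mul_assoc]
      _ = 0 := by rw [hG]; exact hN
  have hGQ : hM.sqrt * QI = 0 := conjTranspose_mul_self_eq_zero.mp hX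
  have hQG : QI * hM.sqrt = 0 := by
    have : (hM.sqrt * QI)ᴴ = 0 := by rw [hGQ, conjTranspose_zero]
    rwa [conjTranspose_mul, hGH, hQIH] at this
  have hQM : QI * M = 0 := by
    rw [← hG, ← Matrix.mul_assoc, hQG, Matrix.zero_mul]
  have hsub : (P ⊗ₖ (1 : Matrix ζ ζ ℂ)) = 1 - QI := by
    have h1 : P ⊗ₖ (1 : Matrix ζ ζ ℂ) + QI = 1 := by
      rw [hQIdef, ← Matrix.add_kronecker, hQdef, add_sub_cancel, Matrix.one_kronecker_one]
    exact eq_sub_of_add_eq h1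
  rw [hsub, Matrix.sub_mul, Matrix.one_mul, hQM, sub_zero]


end Generic


lemma exists_proj {m : Type*} [Fintype m] [DecidableEq m] (σ : Matrix m m ℂ)
    (hσ : σ.IsHermitian) :
    ∃ P : Matrix m m ℂ, Pᴴ = P ∧ P * P = P ∧ P * σ = σ ∧
      ∃ (B : Matrix m {a // hσ.eigenvalues a ≠ 0} ℂ)
        (C : Matrix {a // hσ.eigenvalues a ≠ 0} m ℂ), P = B * C := by
  set V : Matrix m m ℂ := (hσ.eigenvectorUnitary : Matrix m m ℂ) with hV
  set d : m → ℂ := fun a => if hσ.eigenvalues a = 0 then 0 else 1 with hd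
  have hmid : Vᴴ * V = 1 := by
    rw [← Matrix.star_eq_conjTranspose]
    exact Matrix.mem_unitaryGroup_iff'.mp hσ.eigenvectorUnitary.2
  have hds : star d = d := by
    funext a
    by_cases hh : hσ.eigenvalues a = 0 <;> simp [hd, hh]
  have hdd : (fun i => d i * d i) = d := by
    funext a
    by_cases hh : hσ.eigenvalues a = 0 <;> simp [hd, hh]
  have hDH : (diagonal d)ᴴ = diagonal d := by
    rw [diagonal_conjTranspose, hds]
  have hDD : diagonal d * diagonal d = diagonal d := by
    rw [diagonal_mul_diagonal, hdd]
  refine ⟨V * diagonal d * Vᴴ, ?_, ?_, ?_, ?_⟩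
  · simp only [Matrix.conjTranspose_mul, Matrix.conjTranspose_conjTranspose, hDH,
      Matrix.mul_assoc]
  · simp only [Matrix.mul_assoc]
    rw [← Matrix.mul_assoc Vᴴ V, hmid, Matrix.one_mul, ← Matrix.mul_assoc (diagonal d), hDD]
  · have hspec : σ = V * diagonal (RCLike.ofReal ∘ hσ.eigenvalues) * Vᴴ := by
      rw [← Matrix.star_eq_conjTranspose]
      exact hσ.spectral_theorem
    have hde : (fun i => d i * (RCLike.ofReal ∘ hσ.eigenvalues) i)
        = RCLike.ofReal ∘ hσ.eigenvalues := by
      funext a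
      by_cases hh : hσ.eigenvalues a = 0 <;> simp [hd, hh, Function.comp]
    have hDE : diagonal d * diagonal (RCLike.ofReal ∘ hσ.eigenvalues)
        = diagonal (RCLike.ofReal ∘ hσ.eigenvalues) := by
      rw [diagonal_mul_diagonal, hde]
    conv_lhs => rw [hspec]
    conv_rhs => rw [hspec]
    simp only [Matrix.mul_assoc]
    rw [← Matrix.mul_assoc Vᴴ V, hmid, Matrix.one_mul,
      ← Matrix.mul_assoc (diagonal d), hDE]
  · refine ⟨Matrix.of fun a s => V a s.val,
      Matrix.of fun s b => d s.val * star (V b s.val), ?_⟩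
    ext a b
    have hPapp : (V * diagonal d * Vᴴ) a b = ∑ c, V a c * d c * star (V b c) := by
      rw [Matrix.mul_apply]
      refine Finset.sum_congr rfl fun c _ => ?_
      rw [Matrix.mul_diagonal, Matrix.conjTranspose_apply]
    rw [hPapp, Matrix.mul_apply]
    have h1 : ∑ c, V a c * d c * star (V b c)
        = ∑ c ∈ Finset.univ.filter (fun c => hσ.eigenvalues c ≠ 0),
            V a c * d c * star (V b c) := by
      refine (Finset.sum_filter_of_ne fun c _ hne => ?_).symm
      intro hc
      apply hne
      simp [hd, hc]
    rw [h1, Finset.sum_subtype (p := fun c => hσ.eigenvalues c ≠ 0)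
      (Finset.univ.filter fun c => hσ.eigenvalues c ≠ 0)
      (fun c => by simp) (fun c => V a c * d c * star (V b c))]
    refine Finset.sum_congr rfl fun s _ => ?_
    simp only [Matrix.of_apply]
    ring

section PiWorld

variable {n : ℕ} {A : Fin n → Type*} [∀ i, Fintype (A i)] [∀ i, DecidableEq (A i)]

/-- split a pi type along a finset -/
def eS (S : Finset (Fin n)) :
    (∀ i, A i) ≃ (∀ i : {i // i ∈ S}, A i.val) × (∀ i : {i // i ∉ S}, A i.val) :=
  Equiv.piEquivPiSubtypeProd (fun i => i ∈ S) A

lemma glue_eq (S : Finset (Fin n)) (x z) : glue S x z = (eS (A := A) S).symm (x, z) := rfl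

lemma red_eq_pt (ρ : Matrix (∀ i, A i) (∀ i, A i) ℂ) (S : Finset (Fin n)) :
    reduceMat ρ S = pt (ρ.submatrix ⇑(eS (A := A) S).symm ⇑(eS (A := A) S).symm) := by
  ext x y
  show ∑ z, ρ (glue S x z) (glue S y z)
      = ∑ z, ρ ((eS (A := A) S).symm (x, z)) ((eS (A := A) S).symm (y, z))
  simp only [glue_eq]

/-- restriction of a point to the singleton coordinate set -/
def toK (j : Fin n) (x : ∀ i, A i) : ∀ i : {i // i ∈ ({j} : Finset (Fin n))}, A i.val :=
  fun i => x i.val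

/-- a single-site operator amplified to the whole space -/
noncomputable def amp (j : Fin n)
    (X : Matrix (∀ i : {i // i ∈ ({j} : Finset (Fin n))}, A i.val)
      (∀ i : {i // i ∈ ({j} : Finset (Fin n))}, A i.val) ℂ) :
    Matrix (∀ i, A i) (∀ i, A i) ℂ :=
  ((X ⊗ₖ (1 : Matrix (∀ i : {i // i ∉ ({j} : Finset (Fin n))}, A i.val)
      (∀ i : {i // i ∉ ({j} : Finset (Fin n))}, A i.val) ℂ)).submatrix
    ⇑(eS (A := A) ({j} : Finset (Fin n))) ⇑(eS (A := A) ({j} : Finset (Fin n))))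

lemma amp_fix (ρ : Matrix (∀ i, A i) (∀ i, A i) ℂ) (hρ : ρ.PosSemidef) (j : Fin n)
    (P : Matrix (∀ i : {i // i ∈ ({j} : Finset (Fin n))}, A i.val)
      (∀ i : {i // i ∈ ({j} : Finset (Fin n))}, A i.val) ℂ)
    (hP : Pᴴ = P) (hPP : P * P = P) (hker : P * reduceMat ρ {j} = reduceMat ρ {j}) :
    amp j P * ρ = ρ := by
  set e := eS (A := A) ({j} : Finset (Fin n)) with he
  have hρ' : (ρ.submatrix ⇑e.symm ⇑e.symm).PosSemidef := hρ.submatrix _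
  have hker' : P * pt (ρ.submatrix ⇑e.symm ⇑e.symm) = pt (ρ.submatrix ⇑e.symm ⇑e.symm) := by
    rw [← red_eq_pt]; exact hker
  have hkey := key _ hρ' P hP hPP hker'
  have hρeq : (ρ.submatrix ⇑e.symm ⇑e.symm).submatrix ⇑e ⇑e = ρ := by
    rw [Matrix.submatrix_submatrix]
    have h1 : ⇑e.symm ∘ ⇑e = id := by funext u; simp
    rw [h1, Matrix.submatrix_id_id]
  calc amp j P * ρ
      = (P ⊗ₖ 1).submatrix ⇑e ⇑e * (ρ.submatrix ⇑e.symm ⇑e.symm).submatrix ⇑e ⇑e := by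
        rw [hρeq]; rfl
    _ = ((P ⊗ₖ 1) * ρ.submatrix ⇑e.symm ⇑e.symm).submatrix ⇑e ⇑e :=
        Matrix.submatrix_mul_equiv _ _ _ e _
    _ = ρ := by rw [hkey, hρeq]

variable (P : ∀ j : Fin n, Matrix (∀ i : {i // i ∈ ({j} : Finset (Fin n))}, A i.val)
      (∀ i : {i // i ∈ ({j} : Finset (Fin n))}, A i.val) ℂ)

/-- partial tensor products of the single-site projections -/
noncomputable def TT (l : List (Fin n)) : Matrix (∀ i, A i) (∀ i, A i) ℂ :=
  Matrix.of fun x y =>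
    (∏ j ∈ l.toFinset, P j (toK j x) (toK j y)) *
      ∏ m ∈ Finset.univ.filter (fun m => m ∉ l), (if x m = y m then (1 : ℂ) else 0)

lemma TT_nil : TT P [] = 1 := by
  ext x y
  by_cases h : x = y
  · subst h
    simp [TT, Matrix.one_apply_eq]
  · obtain ⟨i, hi⟩ : ∃ i, x i ≠ y i := by
      by_contra hc; push_neg at hc; exact h (funext hc)
    rw [Matrix.one_apply_ne h]
    simp only [TT, Matrix.of_apply, List.toFinset_nil, Finset.prod_empty, one_mul]
    refine Finset.prod_eq_zero (Finset.mem_filter.mpr ⟨Finset.mem_univ i, by simp⟩) ?_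
    rw [if_neg hi]

lemma TT_cons (j : Fin n) (l : List (Fin n)) (hj : j ∉ l) :
    TT P (j :: l) = amp j (P j) * TT P l := by
  have hm : j ∈ ({j} : Finset (Fin n)) := Finset.mem_singleton_self j
  ext x y
  rw [Matrix.mul_apply]
  rw [← Equiv.sum_comp (eS (A := A) ({j} : Finset (Fin n))).symm
    (fun z => amp j (P j) x z * TT P l z y)]
  rw [Fintype.sum_prod_type]
  set e := eS (A := A) ({j} : Finset (Fin n)) with he
  have hamp : ∀ k w, amp j (P j) x (e.symm (k, w)) =
      P j (toK j x) k * (if (fun (i : {i // i ∉ ({j} : Finset (Fin n))}) => x i.val) = w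
        then (1 : ℂ) else 0) := by
    intro k w
    show (P j ⊗ₖ (1 : Matrix _ _ ℂ)) (e x) (e (e.symm (k, w))) = _
    rw [Equiv.apply_symm_apply]
    rw [Matrix.kroneckerMap_apply]
    have h1 : (e x).1 = toK j x := rfl
    have h2 : (e x).2 = fun (i : {i // i ∉ ({j} : Finset (Fin n))}) => x i.val := rfl
    rw [h1, h2, Matrix.one_apply]
  simp only [hamp]
  simp only [mul_ite, mul_one, mul_zero, ite_mul, zero_mul]
  simp only [Finset.sum_ite_eq, Finset.mem_univ, if_true]
  -- now : TT P (j::l) x y = ∑ k, P j (toK j x) k * TT P l (e.symm (k, fun i => x i.val)) y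
  have hx' : ∀ k (i : Fin n), i ≠ j →
      e.symm (k, fun (i : {i // i ∉ ({j} : Finset (Fin n))}) => x i.val) i = x i := by
    intro k i hi
    show (if h : i ∈ ({j} : Finset (Fin n)) then k ⟨i, h⟩ else x i) = x i
    rw [dif_neg (by simpa using hi)]
  have hx'j : ∀ k, e.symm (k, fun (i : {i // i ∉ ({j} : Finset (Fin n))}) => x i.val) j
      = k ⟨j, hm⟩ := by
    intro k
    show (if h : j ∈ ({j} : Finset (Fin n)) then k ⟨j, h⟩ else x j) = k ⟨j, hm⟩
    rw [dif_pos hm]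
  have hTT : ∀ k, TT P l (e.symm (k, fun (i : {i // i ∉ ({j} : Finset (Fin n))}) => x i.val)) y
      = (∏ i ∈ l.toFinset, P i (toK i x) (toK i y)) *
        ((if k ⟨j, hm⟩ = y j then (1 : ℂ) else 0) *
          ∏ m ∈ Finset.univ.filter (fun m => m ∉ (j :: l)), (if x m = y m then (1 : ℂ) else 0)) := by
    intro k
    show (∏ i ∈ l.toFinset, P i
        (toK i (e.symm (k, fun (i : {i // i ∉ ({j} : Finset (Fin n))}) => x i.val))) (toK i y)) *
      ∏ m ∈ Finset.univ.filter (fun m => m ∉ l),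
        (if e.symm (k, fun (i : {i // i ∉ ({j} : Finset (Fin n))}) => x i.val) m = y m
          then (1 : ℂ) else 0) = _
    have hp1 : ∏ i ∈ l.toFinset, P i
        (toK i (e.symm (k, fun (i : {i // i ∉ ({j} : Finset (Fin n))}) => x i.val))) (toK i y)
        = ∏ i ∈ l.toFinset, P i (toK i x) (toK i y) := by
      refine Finset.prod_congr rfl fun i hi => ?_
      have hij : i ≠ j := by
        intro hij; exact hj (hij ▸ List.mem_toFinset.mp hi)
      congr 1
      funext m
      have hmi : m.val = i := Finset.mem_singleton.mp m.2
      exact hx' k m.val (by rw [hmi]; exact hij)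
    have hsplit : Finset.univ.filter (fun m => m ∉ l)
        = insert j (Finset.univ.filter (fun m => m ∉ (j :: l))) := by
      ext m
      by_cases hmj : m = j <;> simp [hmj, hj, List.mem_cons]
    have hjnot : j ∉ Finset.univ.filter (fun m => m ∉ (j :: l)) := by
      simp [List.mem_cons]
    rw [hp1, hsplit, Finset.prod_insert hjnot, hx'j k]
    congr 1
    congr 1
    refine Finset.prod_congr rfl fun m hmem => ?_
    have hmr : m ≠ j := by
      have := (Finset.mem_filter.mp hmem).2
      simp only [List.mem_cons, not_or] at this
      exact this.1
    rw [hx' k m hmr]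
  simp only [hTT]
  have hcond : ∀ k, (k ⟨j, hm⟩ = y j) = (k = toK j y) := by
    intro k
    refine propext ⟨fun h => funext fun m => ?_, fun h => by rw [h]; rfl⟩
    have hmm : m = ⟨j, hm⟩ := Subtype.ext (Finset.mem_singleton.mp m.2)
    rw [hmm]
    exact h
  simp only [hcond]
  simp only [mul_ite, mul_one, mul_zero, ite_mul, zero_mul]
  rw [Finset.sum_ite_eq']
  simp only [Finset.mem_univ, if_true]
  show (∏ i ∈ (j :: l).toFinset, P i (toK i x) (toK i y)) *
      ∏ m ∈ Finset.univ.filter (fun m => m ∉ (j :: l)), (if x m = y m then (1 : ℂ) else 0) = _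
  rw [List.toFinset_cons, Finset.prod_insert (by simpa using hj)]
  ring

lemma TT_fix (ρ : Matrix (∀ i, A i) (∀ i, A i) ℂ) (hfix : ∀ j, amp j (P j) * ρ = ρ) :
    ∀ l : List (Fin n), l.Nodup → TT P l * ρ = ρ := by
  intro l
  induction l with
  | nil => intro _; rw [TT_nil, Matrix.one_mul]
  | cons j l ih =>
    intro h
    have hnd := List.nodup_cons.mp h
    rw [TT_cons P j l hnd.1, Matrix.mul_assoc, ih hnd.2, hfix j]

end PiWorld

end PRSP

/-- The product of the ranks of all single-party reduced matrices of a positive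
semidefinite `n`-partite matrix bounds the rank of the matrix itself. -/
theorem prod_rank_single_party_ge_rank
    {n : ℕ} (hn : 1 ≤ n) {A : Fin n → Type*}
    [∀ i, Fintype (A i)] [∀ i, DecidableEq (A i)]
    (ρ : Matrix (∀ i, A i) (∀ i, A i) ℂ) (hρ : ρ.PosSemidef) :
    ∏ j : Fin n, (reduceMat ρ {j}).rank ≥ ρ.rank := by
  classical
  have hherm : ρ.IsHermitian := hρ.isHermitian
  have hσ : ∀ j : Fin n, (reduceMat ρ {j}).IsHermitian := by
    intro j
    refine Matrix.ext fun x y => ?_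
    rw [Matrix.conjTranspose_apply]
    show star (∑ z, ρ (glue {j} y z) (glue {j} x z)) = ∑ z, ρ (glue {j} x z) (glue {j} y z)
    rw [star_sum]
    refine Finset.sum_congr rfl fun z _ => ?_
    rw [← Matrix.conjTranspose_apply, hherm.eq]
  have hex : ∀ j : Fin n, ∃ P, Pᴴ = P ∧ P * P = P ∧
      P * reduceMat ρ {j} = reduceMat ρ {j} ∧
      ∃ (B : Matrix (∀ i : {i // i ∈ ({j} : Finset (Fin n))}, A i.val)
          {a // (hσ j).eigenvalues a ≠ 0} ℂ)
        (C : Matrix {a // (hσ j).eigenvalues a ≠ 0}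
          (∀ i : {i // i ∈ ({j} : Finset (Fin n))}, A i.val) ℂ), P = B * C :=
    fun j => PRSP.exists_proj _ (hσ j)
  choose P hPH hPP hPfix hBC using hex
  choose B C hBC using hBC
  have hfix : ∀ j, PRSP.amp j (P j) * ρ = ρ :=
    fun j => PRSP.amp_fix ρ hρ j (P j) (hPH j) (hPP j) (hPfix j)
  have hT : PRSP.TT P (List.finRange n) * ρ = ρ :=
    PRSP.TT_fix P ρ hfix _ (List.nodup_finRange n)
  let BB : Matrix (∀ i, A i) (∀ j : Fin n, {a // (hσ j).eigenvalues a ≠ 0}) ℂ :=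
    Matrix.of fun x t => ∏ j, B j (PRSP.toK j x) (t j)
  let CC : Matrix (∀ j : Fin n, {a // (hσ j).eigenvalues a ≠ 0}) (∀ i, A i) ℂ :=
    Matrix.of fun t y => ∏ j, C j (t j) (PRSP.toK j y)
  have hBBCC : BB * CC = PRSP.TT P (List.finRange n) := by
    ext x y
    rw [Matrix.mul_apply]
    show ∑ t : ∀ j : Fin n, {a // (hσ j).eigenvalues a ≠ 0},
        (∏ j, B j (PRSP.toK j x) (t j)) * (∏ j, C j (t j) (PRSP.toK j y)) = _
    have h1 : ∀ t : ∀ j : Fin n, {a // (hσ j).eigenvalues a ≠ 0},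
        (∏ j, B j (PRSP.toK j x) (t j)) * (∏ j, C j (t j) (PRSP.toK j y))
          = ∏ j, (B j (PRSP.toK j x) (t j) * C j (t j) (PRSP.toK j y)) :=
      fun t => (Finset.prod_mul_distrib).symm
    simp only [h1]
    rw [← Fintype.prod_sum
      (f := fun j (s : {a // (hσ j).eigenvalues a ≠ 0}) =>
        B j (PRSP.toK j x) s * C j s (PRSP.toK j y))]
    show _ = (∏ j ∈ (List.finRange n).toFinset, P j (PRSP.toK j x) (PRSP.toK j y)) *
      ∏ m ∈ Finset.univ.filter (fun m => m ∉ List.finRange n),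
        (if x m = y m then (1 : ℂ) else 0)
    have h2 : (List.finRange n).toFinset = Finset.univ := by
      ext m; simp [List.mem_finRange]
    have h3 : Finset.univ.filter (fun m : Fin n => m ∉ List.finRange n) = ∅ := by
      ext m; simp [List.mem_finRange]
    rw [h2, h3, Finset.prod_empty, mul_one]
    refine Finset.prod_congr rfl fun j _ => ?_
    rw [hBC j, Matrix.mul_apply]
  have h4 : ρ.rank ≤ Fintype.card (∀ j : Fin n, {a // (hσ j).eigenvalues a ≠ 0}) := by
    calc ρ.rank = (BB * (CC * ρ)).rank := by rw [← Matrix.mul_assoc, hBBCC, hT]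
      _ ≤ BB.rank := Matrix.rank_mul_le_left _ _
      _ ≤ Fintype.card (∀ j : Fin n, {a // (hσ j).eigenvalues a ≠ 0}) :=
          Matrix.rank_le_card_width _
  have h5 : Fintype.card (∀ j : Fin n, {a // (hσ j).eigenvalues a ≠ 0})
      = ∏ j, (reduceMat ρ {j}).rank := by
    rw [Fintype.card_pi]
    exact Finset.prod_congr rfl fun j _ => ((hσ j).rank_eq_card_non_zero_eigs).symm
  exact ge_iff_le.mpr (h5 ▸ h4)
end

section
/- For every n ≥ 3 and every positive semidefinite n-partite matrix ρ, the product over k : Fin n of the ranks of the (n−1)-party reductions obtained by tracing out party k bounds the rank of the first single-party reduction: ∏_{k : Fin n} r(ρ_{(Fin n) \ {k}}) ≥ r(ρ_{{0}}). -/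
open Matrix
open scoped ComplexOrder

/-- Any matrix has a spanning subfamily of at most `rank` many columns. -/
theorem exists_spanning_cols {m' c' : Type*} [Fintype m'] [Fintype c'] (M : Matrix m' c' ℂ) :
    ∃ (k : ℕ) (g : Fin k → c') (co : c' → Fin k → ℂ), k ≤ M.rank ∧
      ∀ r j, M r j = ∑ t, co j t * M r (g t) := by
  classical
  obtain ⟨b, hbsub, hbspan, hbli⟩ := exists_linearIndependent ℂ (Set.range Mᵀ)
  have hbfin : b.Finite := (Set.finite_range _).subset hbsub
  haveI := hbfin.fintype
  set k := Fintype.card b with hk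
  set e : Fin k ≃ b := (Fintype.equivFin b).symm with he
  have hpre : ∀ t : Fin k, ∃ j : c', Mᵀ j = (e t : m' → ℂ) :=
    fun t => Set.mem_range.mp (hbsub (e t).2)
  choose g hg using hpre
  have hrange : Set.range (fun t : Fin k => Mᵀ (g t)) = b := by
    ext v
    constructor
    · rintro ⟨t, rfl⟩
      show Mᵀ (g t) ∈ b
      rw [hg]
      exact (e t).2
    · intro hv
      refine ⟨(Fintype.equivFin b) ⟨v, hv⟩, ?_⟩
      show Mᵀ (g _) = v
      rw [hg, he]
      simp
  have hcol : ∀ j : c', Mᵀ j ∈ Submodule.span ℂ (Set.range (fun t : Fin k => Mᵀ (g t))) := by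
    intro j
    rw [hrange, hbspan]
    exact Submodule.subset_span ⟨j, rfl⟩
  choose co hco using fun j => (Submodule.mem_span_range_iff_exists_fun ℂ).mp (hcol j)
  refine ⟨k, g, co, ?_, ?_⟩
  · have h1 : Module.finrank ℂ (Submodule.span ℂ b) = k := by
      rw [finrank_span_set_eq_card hbli, Set.toFinset_card]
    rw [M.rank_eq_finrank_span_cols]
    change k ≤ Module.finrank ℂ (Submodule.span ℂ (Set.range Mᵀ))
    rw [← hbspan, h1]
  · intro r j
    have h2 := congrFun (hco j) r
    simp only [Finset.sum_apply, Pi.smul_apply, smul_eq_mul, Matrix.transpose_apply] at h2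
    exact h2.symm

theorem rank_submatrix_equiv {m n m' n' : Type*} [Fintype m] [Fintype n] [Fintype m'] [Fintype n']
    (A : Matrix m n ℂ) (e₁ : m' ≃ m) (e₂ : n' ≃ n) :
    (A.submatrix e₁ e₂).rank = A.rank := by
  classical
  rw [Matrix.rank, Matrix.rank, mulVecLin_submatrix, LinearMap.range_comp, LinearMap.range_comp,
    show LinearMap.funLeft ℂ ℂ ⇑e₂.symm = LinearEquiv.funCongrLeft ℂ ℂ e₂.symm from rfl,
    LinearEquiv.range, Submodule.map_top,
    show LinearMap.funLeft ℂ ℂ ⇑e₁ = LinearEquiv.funCongrLeft ℂ ℂ e₁ from rfl]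
  exact LinearEquiv.finrank_map_eq _ _

/-- Key tensor flattening-rank inequality. -/
theorem tensor_rank_le {W X Y Z : Type*} [Fintype W] [Fintype X] [Fintype Y] [Fintype Z]
    (f : W → X → Y → Z → ℂ) :
    (Matrix.of fun (x : X) (p : W × Y × Z) => f p.1 x p.2.1 p.2.2).rank ≤
      (Matrix.of fun (p : X × Y) (q : W × Z) => f q.1 p.1 p.2 q.2).rank *
        (Matrix.of fun (p : X × Z) (q : W × Y) => f q.1 p.1 q.2 p.2).rank := by
  classical
  obtain ⟨k2, g2, c2, hk2, h2⟩ :=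
    exists_spanning_cols (Matrix.of fun (p : X × Y) (q : W × Z) => f q.1 p.1 p.2 q.2)
  obtain ⟨k3, g3, c3, hk3, h3⟩ :=
    exists_spanning_cols (Matrix.of fun (p : X × Z) (q : W × Y) => f q.1 p.1 q.2 p.2)
  simp only [Matrix.of_apply] at h2 h3
  set P : Matrix X (Fin k3 × Fin k2) ℂ :=
    Matrix.of fun x ti => f (g2 ti.2).1 x (g3 ti.1).2 (g2 ti.2).2 with hP
  set Q : Matrix (Fin k3 × Fin k2) (W × Y × Z) ℂ :=
    Matrix.of fun ti q => c3 (q.1, q.2.1) ti.1 * c2 ((g3 ti.1).1, q.2.2) ti.2 with hQ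
  have hfac : (Matrix.of fun (x : X) (p : W × Y × Z) => f p.1 x p.2.1 p.2.2) = P * Q := by
    ext x q
    obtain ⟨w, y, z⟩ := q
    have e1 : f w x y z = ∑ t, c3 (w, y) t * f (g3 t).1 x (g3 t).2 z := h3 (x, z) (w, y)
    have e2 : ∀ t, f (g3 t).1 x (g3 t).2 z
        = ∑ i, c2 ((g3 t).1, z) i * f (g2 i).1 x (g3 t).2 (g2 i).2 :=
      fun t => h2 (x, (g3 t).2) ((g3 t).1, z)
    show f w x y z = (P * Q) x (w, y, z)
    rw [Matrix.mul_apply, Fintype.sum_prod_type]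
    simp only [hP, hQ, Matrix.of_apply]
    rw [e1]
    refine Finset.sum_congr rfl fun t _ => ?_
    rw [e2 t, Finset.mul_sum]
    exact Finset.sum_congr rfl fun i _ => by ring
  rw [hfac]
  calc (P * Q).rank ≤ P.rank := Matrix.rank_mul_le_left P Q
    _ ≤ Fintype.card (Fin k3 × Fin k2) := Matrix.rank_le_card_width P
    _ = k3 * k2 := by simp
    _ ≤ _ := by
        rw [Nat.mul_comm]
        exact Nat.mul_le_mul hk2 hk3

section Aux

variable {n : ℕ} {A : Fin n → Type*} [∀ i, Fintype (A i)] [∀ i, DecidableEq (A i)]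

def pairUnionEquiv (S T : Finset (Fin n)) (hST : Disjoint S T) :
    ((∀ i : {i // i ∈ S}, A i.val) × (∀ i : {i // i ∈ T}, A i.val)) ≃
      (∀ i : {i // i ∈ S ∪ T}, A i.val) where
  toFun p j := if h : j.val ∈ S then p.1 ⟨j.val, h⟩ else
    p.2 ⟨j.val, (Finset.mem_union.mp j.prop).resolve_left h⟩
  invFun x := (fun i => x ⟨i.val, Finset.mem_union_left _ i.prop⟩,
    fun i => x ⟨i.val, Finset.mem_union_right _ i.prop⟩)
  left_inv p := by
    refine Prod.ext (funext fun i => ?_) (funext fun i => ?_)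
    · exact dif_pos i.prop
    · exact dif_neg (Finset.disjoint_right.mp hST i.prop)
  right_inv x := by
    funext j
    by_cases h : j.val ∈ S
    · exact dif_pos h
    · exact dif_neg h

def memNotEquiv (P Q : Finset (Fin n)) (h : ∀ i, i ∉ Q ↔ i ∈ P) :
    (∀ i : {i // i ∈ P}, A i.val) ≃ (∀ i : {i // i ∉ Q}, A i.val) where
  toFun x j := x ⟨j.val, (h j.val).mp j.prop⟩
  invFun y i := y ⟨i.val, (h i.val).mpr i.prop⟩
  left_inv x := funext fun _ => rfl
  right_inv y := funext fun _ => rfl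

noncomputable def NN (G : Matrix (∀ i, A i) (∀ i, A i) ℂ) (S : Finset (Fin n)) :
    Matrix ((∀ i, A i) × (∀ i : {i // i ∉ S}, A i.val)) (∀ i : {i // i ∈ S}, A i.val) ℂ :=
  Matrix.of fun p x => G p.1 (glue S x p.2)

lemma key_partition (G : Matrix (∀ i, A i) (∀ i, A i) ℂ) (S T U : Finset (Fin n))
    (hST : Disjoint S T) (hSU : Disjoint S U) (hTU : Disjoint T U)
    (hcov : S ∪ T ∪ U = Finset.univ) :
    (NN G S).rank ≤ (NN G (S ∪ T)).rank * (NN G (S ∪ U)).rank := by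
  classical
  have hmem : ∀ i : Fin n, i ∈ S ∨ i ∈ T ∨ i ∈ U := by
    intro i
    have h := hcov ▸ Finset.mem_univ i
    simpa [Finset.mem_union, or_assoc] using h
  have hTUS : ∀ i, i ∉ S ↔ i ∈ T ∪ U := by
    intro i
    constructor
    · intro h
      rcases hmem i with h' | h' | h'
      · exact absurd h' h
      · exact Finset.mem_union_left _ h'
      · exact Finset.mem_union_right _ h'
    · intro h hS
      rcases Finset.mem_union.mp h with h' | h'
      · exact Finset.disjoint_left.mp hST hS h'
      · exact Finset.disjoint_left.mp hSU hS h'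
  have hUST : ∀ i, i ∉ S ∪ T ↔ i ∈ U := by
    intro i
    constructor
    · intro h
      rcases hmem i with h' | h' | h'
      · exact absurd (Finset.mem_union_left _ h') h
      · exact absurd (Finset.mem_union_right _ h') h
      · exact h'
    · intro h h'
      rcases Finset.mem_union.mp h' with h'' | h''
      · exact Finset.disjoint_left.mp hSU h'' h
      · exact Finset.disjoint_left.mp hTU h'' h
  have hTSU : ∀ i, i ∉ S ∪ U ↔ i ∈ T := by
    intro i
    constructor
    · intro h
      rcases hmem i with h' | h' | h'
      · exact absurd (Finset.mem_union_left _ h') h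
      · exact h'
      · exact absurd (Finset.mem_union_right _ h') h
    · intro h h'
      rcases Finset.mem_union.mp h' with h'' | h''
      · exact Finset.disjoint_left.mp hST h'' h
      · exact Finset.disjoint_right.mp hTU h'' h
  let X := ∀ i : {i // i ∈ S}, A i.val
  let Y := ∀ i : {i // i ∈ T}, A i.val
  let Z := ∀ i : {i // i ∈ U}, A i.val
  let W := ∀ i, A i
  let eYZ : Y × Z ≃ (∀ i : {i // i ∉ S}, A i.val) :=
    (pairUnionEquiv T U hTU).trans (memNotEquiv (T ∪ U) S hTUS)
  let eU' : Z ≃ (∀ i : {i // i ∉ S ∪ T}, A i.val) := memNotEquiv U (S ∪ T) hUST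
  let eT' : Y ≃ (∀ i : {i // i ∉ S ∪ U}, A i.val) := memNotEquiv T (S ∪ U) hTSU
  let eST := pairUnionEquiv (A := A) S T hST
  let eSU := pairUnionEquiv (A := A) S U hSU
  let f : W → X → Y → Z → ℂ := fun e x y z => G e (glue S x (eYZ (y, z)))
  have hglue2 : ∀ (x : X) (y : Y) (z : Z),
      glue (S ∪ T) (eST (x, y)) (eU' z) = glue S x (eYZ (y, z)) := by
    intro x y z
    funext i
    by_cases hS : i ∈ S
    · have h1 : i ∈ S ∪ T := Finset.mem_union_left _ hS
      simp only [glue, eST, eYZ, pairUnionEquiv, memNotEquiv, Equiv.trans_apply,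
        Equiv.coe_fn_mk, dif_pos h1, dif_pos hS]
    · by_cases hT : i ∈ T
      · have h1 : i ∈ S ∪ T := Finset.mem_union_right _ hT
        simp only [glue, eST, eYZ, pairUnionEquiv, memNotEquiv, Equiv.trans_apply,
          Equiv.coe_fn_mk, dif_pos h1, dif_neg hS, dif_pos hT]
      · have h1 : i ∉ S ∪ T := by
          simp [Finset.mem_union, hS, hT]
        simp only [glue, eST, eU', eYZ, pairUnionEquiv, memNotEquiv, Equiv.trans_apply,
          Equiv.coe_fn_mk, dif_neg h1, dif_neg hS, dif_neg hT]
  have hglue3 : ∀ (x : X) (y : Y) (z : Z),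
      glue (S ∪ U) (eSU (x, z)) (eT' y) = glue S x (eYZ (y, z)) := by
    intro x y z
    funext i
    by_cases hS : i ∈ S
    · have h1 : i ∈ S ∪ U := Finset.mem_union_left _ hS
      simp only [glue, eSU, eYZ, pairUnionEquiv, memNotEquiv, Equiv.trans_apply,
        Equiv.coe_fn_mk, dif_pos h1, dif_pos hS]
    · by_cases hT : i ∈ T
      · have h1 : i ∉ S ∪ U := (hTSU i).mpr hT
        simp only [glue, eSU, eT', eYZ, pairUnionEquiv, memNotEquiv, Equiv.trans_apply,
          Equiv.coe_fn_mk, dif_neg h1, dif_neg hS, dif_pos hT]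
      · have hU : i ∈ U := by
          rcases hmem i with h | h | h
          · exact absurd h hS
          · exact absurd h hT
          · exact h
        have h1 : i ∈ S ∪ U := Finset.mem_union_right _ hU
        simp only [glue, eSU, eYZ, pairUnionEquiv, memNotEquiv, Equiv.trans_apply,
          Equiv.coe_fn_mk, dif_pos h1, dif_neg hS, dif_neg hT]
  have r1 : (Matrix.of fun (x : X) (p : W × Y × Z) => f p.1 x p.2.1 p.2.2).rank
      = (NN G S).rank := by
    have heq : (Matrix.of fun (x : X) (p : W × Y × Z) => f p.1 x p.2.1 p.2.2)
        = ((NN G S)ᵀ).submatrix (Equiv.refl X) ((Equiv.refl W).prodCongr eYZ) := by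
      ext x p
      rfl
    rw [heq, rank_submatrix_equiv, Matrix.rank_transpose]
  have r2 : (Matrix.of fun (p : X × Y) (q : W × Z) => f q.1 p.1 p.2 q.2).rank
      = (NN G (S ∪ T)).rank := by
    have heq : (Matrix.of fun (p : X × Y) (q : W × Z) => f q.1 p.1 p.2 q.2)
        = ((NN G (S ∪ T))ᵀ).submatrix eST ((Equiv.refl W).prodCongr eU') := by
      ext p q
      show f q.1 p.1 p.2 q.2 = G q.1 (glue (S ∪ T) (eST (p.1, p.2)) (eU' q.2))
      rw [hglue2]
    rw [heq, rank_submatrix_equiv, Matrix.rank_transpose]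
  have r3 : (Matrix.of fun (p : X × Z) (q : W × Y) => f q.1 p.1 q.2 p.2).rank
      = (NN G (S ∪ U)).rank := by
    have heq : (Matrix.of fun (p : X × Z) (q : W × Y) => f q.1 p.1 q.2 p.2)
        = ((NN G (S ∪ U))ᵀ).submatrix eSU ((Equiv.refl W).prodCongr eT') := by
      ext p q
      show f q.1 p.1 q.2 p.2 = G q.1 (glue (S ∪ U) (eSU (p.1, p.2)) (eT' q.2))
      rw [hglue3]
    rw [heq, rank_submatrix_equiv, Matrix.rank_transpose]
  calc (NN G S).rank
      = (Matrix.of fun (x : X) (p : W × Y × Z) => f p.1 x p.2.1 p.2.2).rank := r1.symm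
    _ ≤ _ := tensor_rank_le f
    _ = (NN G (S ∪ T)).rank * (NN G (S ∪ U)).rank := by rw [r2, r3]


lemma reduce_eq (G : Matrix (∀ i, A i) (∀ i, A i) ℂ) (S : Finset (Fin n)) :
    reduceMat (Gᴴ * G) S = (NN G S)ᴴ * (NN G S) := by
  ext x y
  simp only [reduceMat, NN, Matrix.mul_apply, Matrix.conjTranspose_apply, Matrix.of_apply]
  rw [Fintype.sum_prod_type]
  exact Finset.sum_comm


lemma one_le_rank_NN (G : Matrix (∀ i, A i) (∀ i, A i) ℂ) (S : Finset (Fin n))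
    (hG : G ≠ 0) : 1 ≤ (NN G S).rank := by
  classical
  by_contra hlt
  have h0 : (NN G S).rank = 0 := by omega
  apply hG
  -- rank zero means the range of mulVecLin is trivial
  have hbot : LinearMap.range (NN G S).mulVecLin = ⊥ := by
    rw [Matrix.rank] at h0
    exact Submodule.finrank_eq_zero.mp h0
  have hzero : NN G S = 0 := by
    ext p x
    have hmem : (NN G S).mulVecLin (Pi.single x 1) = 0 := by
      have : (NN G S).mulVecLin (Pi.single x 1) ∈ (⊥ : Submodule ℂ _) := by
        rw [← hbot]; exact LinearMap.mem_range_self _ _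
      simpa using this
    have := congrFun hmem p
    simpa [Matrix.mulVecLin_apply, Matrix.mulVec_single] using this
  ext e u
  have hu : glue S (fun i : {i // i ∈ S} => u i.val) (fun i : {i // i ∉ S} => u i.val) = u := by
    funext i
    by_cases h : i ∈ S <;> simp [glue, h]
  have := congrFun (congrFun hzero (e, fun i : {i // i ∉ S} => u i.val))
    (fun i : {i // i ∈ S} => u i.val)
  simpa [NN, hu] using this


lemma rank_NN_le_prod (G : Matrix (∀ i, A i) (∀ i, A i) ℂ) :
    ∀ (m : ℕ) (S : Finset (Fin n)), (Finset.univ \ S).card = m → 1 ≤ m →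
      (NN G S).rank ≤ ∏ k ∈ Finset.univ \ S, (NN G (Finset.univ \ {k})).rank := by
  intro m
  induction m with
  | zero => intro S h h1; omega
  | succ m ih =>
    intro S hcard _
    rcases Nat.eq_zero_or_pos m with hm | hm
    · have h1 : (Finset.univ \ S).card = 1 := by omega
      obtain ⟨k, hk⟩ := Finset.card_eq_one.mp h1
      have hS : S = Finset.univ \ {k} := by
        rw [← Finset.sdiff_sdiff_eq_self (Finset.subset_univ S), hk]
      rw [hk, Finset.prod_singleton, hS]
    · obtain ⟨i, hi⟩ := Finset.card_pos.mp (by omega : 0 < (Finset.univ \ S).card)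
      have hiS : i ∉ S := (Finset.mem_sdiff.mp hi).2
      set U := (Finset.univ \ S).erase i with hU
      have hdST : Disjoint S {i} := by simp [Finset.disjoint_singleton_right, hiS]
      have hdSU : Disjoint S U := by
        refine Finset.disjoint_left.mpr fun a haS haU => ?_
        exact (Finset.mem_sdiff.mp (Finset.mem_of_mem_erase haU)).2 haS
      have hdTU : Disjoint ({i} : Finset (Fin n)) U :=
        Finset.disjoint_singleton_left.mpr (Finset.notMem_erase i _)
      have hcov : S ∪ {i} ∪ U = Finset.univ := by
        ext j
        simp only [Finset.mem_union, hU, Finset.mem_erase, Finset.mem_sdiff,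
          Finset.mem_univ, Finset.mem_singleton, iff_true, true_and]
        by_cases hj : j ∈ S
        · tauto
        · by_cases hj2 : j = i <;> tauto
      have hkey := key_partition G S {i} U hdST hdSU hdTU hcov
      have hSU_eq : S ∪ U = Finset.univ \ {i} := by
        ext j
        simp only [Finset.mem_union, hU, Finset.mem_erase, Finset.mem_sdiff,
          Finset.mem_univ, Finset.mem_singleton, true_and]
        constructor
        · rintro (h | h)
          · intro he; exact hiS (he ▸ h)
          · exact h.1
        · intro h
          by_cases hj : j ∈ S
          · exact Or.inl hj
          · exact Or.inr ⟨h, hj⟩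
      have hUeq : Finset.univ \ (S ∪ {i}) = U := by
        ext j
        simp only [hU, Finset.mem_sdiff, Finset.mem_union, Finset.mem_erase,
          Finset.mem_univ, Finset.mem_singleton, true_and]
        tauto
      have hcard' : (Finset.univ \ (S ∪ {i})).card = m := by
        rw [hUeq, hU, Finset.card_erase_of_mem hi, hcard]
        omega

      have hih := ih (S ∪ {i}) hcard' hm
      rw [hUeq] at hih
      rw [hSU_eq] at hkey
      have hins : Finset.univ \ S = insert i U := by
        rw [hU]; exact (Finset.insert_erase hi).symm
      calc (NN G S).rank ≤ (NN G (S ∪ {i})).rank * (NN G (Finset.univ \ {i})).rank := hkey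
        _ ≤ (∏ k ∈ U, (NN G (Finset.univ \ {k})).rank) * (NN G (Finset.univ \ {i})).rank :=
            Nat.mul_le_mul_right _ hih
        _ = ∏ k ∈ insert i U, (NN G (Finset.univ \ {k})).rank := by
            rw [Finset.prod_insert (Finset.notMem_erase i _)]; ring
        _ = ∏ k ∈ Finset.univ \ S, (NN G (Finset.univ \ {k})).rank := by rw [hins]


end Aux

/-- For a positive semidefinite `n`-partite matrix (`n ≥ 3`), the product over all
parties `k` of the ranks of the `(n-1)`-party reductions obtained by tracing out
party `k` is at least the rank of the reduction onto party `0`. -/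
theorem prod_rank_trace_one_out_ge_rank_single
    {n : ℕ} (hn : 3 ≤ n) {A : Fin n → Type*}
    [∀ i, Fintype (A i)] [∀ i, DecidableEq (A i)]
    (ρ : Matrix (∀ i, A i) (∀ i, A i) ℂ) (hρ : ρ.PosSemidef) :
    ∏ k : Fin n, (reduceMat ρ (Finset.univ \ {k})).rank ≥
      (reduceMat ρ {⟨0, by omega⟩}).rank := by
  classical
  rw [ge_iff_le]
  by_cases hρ0 : ρ = 0
  · have hzero : reduceMat ρ ({⟨0, by omega⟩} : Finset (Fin n)) = 0 := by
      subst hρ0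
      ext x y
      simp [reduceMat]
    rw [hzero, Matrix.rank_zero]
    exact Nat.zero_le _
  · obtain ⟨G, hG⟩ : ∃ G : Matrix (∀ i, A i) (∀ i, A i) ℂ, ρ = Gᴴ * G := by
      open MatrixOrder in
      obtain ⟨B, hB⟩ := CStarAlgebra.nonneg_iff_eq_star_mul_self.mp hρ.nonneg
      exact ⟨B, by rw [hB, Matrix.star_eq_conjTranspose]⟩
    have hGne : G ≠ 0 := by
      intro h
      exact hρ0 (by rw [hG, h]; simp)
    have hrank : ∀ S : Finset (Fin n), (reduceMat ρ S).rank = (NN G S).rank := by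
      intro S
      rw [hG, reduce_eq, Matrix.rank_conjTranspose_mul_self]
    simp only [hrank]
    set x0 : Fin n := ⟨0, by omega⟩ with hx0
    have hcard : (Finset.univ \ ({x0} : Finset (Fin n))).card = n - 1 := by
      rw [Finset.card_sdiff_of_subset (Finset.subset_univ _), Finset.card_singleton, Finset.card_univ,
        Fintype.card_fin]
    have hclaim := rank_NN_le_prod G (n - 1) {x0} hcard (by omega)
    refine le_trans hclaim ?_
    have hsplit : (∏ k ∈ Finset.univ \ {x0}, (NN G (Finset.univ \ {k})).rank) *
        (∏ k ∈ ({x0} : Finset (Fin n)), (NN G (Finset.univ \ {k})).rank)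
        = ∏ k : Fin n, (NN G (Finset.univ \ {k})).rank :=
      Finset.prod_sdiff (Finset.subset_univ _)
    rw [← hsplit, Finset.prod_singleton]
    exact Nat.le_mul_of_pos_right _ (one_le_rank_NN G _ hGne)
end

section
/- Saturation for pure states: let ρ : Matrix (a × b × c) (a × b × c) ℂ be positive semidefinite of rank one (a tripartite pure state). Then r(ρ_AB) · r(ρ_AC) = r(ρ_BC) if and only if r(ρ_B) · r(ρ_C) = r(ρ_A). -/
open Matrix
open scoped ComplexOrder

section
variable {a b c : Type*} [Fintype a] [Fintype b] [Fintype c]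

private lemma rank_map_star {m n : Type*} [Fintype m] [Fintype n] (X : Matrix m n ℂ) :
    (X.map star).rank = X.rank := by
  have : X.map star = (Xᴴ)ᵀ := by ext i j; simp [conjTranspose_apply]
  rw [this, rank_transpose, rank_conjTranspose]

private lemma rank_one_factor {m n : Type*} [Fintype m] [Fintype n] [DecidableEq n]
    (B : Matrix m n ℂ) (h : B.rank ≤ 1) :
    ∃ u : m → ℂ, ∃ w : n → ℂ, ∀ z x, B z x = u z * w x := by
  rw [Matrix.rank, finrank_le_one_iff] at h
  obtain ⟨v0, hv0⟩ := h
  choose cc hc using fun x => hv0 ⟨B.mulVec (Pi.single x 1), LinearMap.mem_range_self _ _⟩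
  refine ⟨fun z => (v0 : m → ℂ) z, cc, fun z x => ?_⟩
  have := congrArg (fun (w : LinearMap.range B.mulVecLin) => (w : m → ℂ) z) (hc x)
  simp only [Submodule.coe_smul, Pi.smul_apply, smul_eq_mul] at this
  rw [mul_comm]; show B z x = cc x * (v0 : m → ℂ) z; rw [this]
  simp [mulVec_single]

private lemma pure_decomp {d : Type*} [Fintype d] [DecidableEq d]
    (ρ : Matrix d d ℂ) (hρ : ρ.PosSemidef) (hpure : ρ.rank = 1) :
    ∃ v : d → ℂ, ∀ x y, ρ x y = (starRingEnd ℂ) (v x) * v y := by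
  obtain ⟨B, hBB⟩ : ∃ B : Matrix d d ℂ, Bᴴ * B = ρ := by
    open scoped MatrixOrder in
    obtain ⟨B, hB⟩ := CStarAlgebra.nonneg_iff_eq_star_mul_self.mp hρ.nonneg
    exact ⟨B, hB.symm⟩
  have hrB : B.rank ≤ 1 := by
    have := rank_conjTranspose_mul_self B
    rw [hBB, hpure] at this; omega
  obtain ⟨u, w, huw⟩ := rank_one_factor B hrB
  set s : ℝ := ∑ z, Complex.normSq (u z) with hs
  have hs0 : 0 ≤ s := Finset.sum_nonneg fun z _ => Complex.normSq_nonneg _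
  refine ⟨fun x => (Real.sqrt s : ℂ) * w x, fun x y => ?_⟩
  have : ρ x y = (∑ z, (starRingEnd ℂ) (u z) * u z) * ((starRingEnd ℂ) (w x) * w y) := by
    rw [← hBB, mul_apply]
    simp only [conjTranspose_apply, huw, star_mul']
    rw [Finset.sum_mul]
    exact Finset.sum_congr rfl fun z _ => by simp only [Complex.star_def]; ring
  rw [this]
  have hsum : (∑ z, (starRingEnd ℂ) (u z) * u z) = (s : ℂ) := by
    rw [hs]; push_cast
    exact Finset.sum_congr rfl fun z _ => by
      rw [← Complex.normSq_eq_conj_mul_self]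
  rw [hsum]
  simp only [RingHom.map_mul, Complex.conj_ofReal]
  rw [show ((Real.sqrt s : ℂ)) * (starRingEnd ℂ) (w x) * ((Real.sqrt s : ℂ) * w y)
      = ((Real.sqrt s : ℂ) * (Real.sqrt s : ℂ)) * ((starRingEnd ℂ) (w x) * w y) by ring,
    ← Complex.ofReal_mul, Real.mul_self_sqrt hs0]

/-- Partial trace over system `C` of a tripartite matrix. -/
noncomputable def traceOutC (ρ : Matrix (a × b × c) (a × b × c) ℂ) :
    Matrix (a × b) (a × b) ℂ :=
  Matrix.of fun p q => ∑ m : c, ρ (p.1, p.2, m) (q.1, q.2, m)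

/-- Partial trace over system `B` of a tripartite matrix. -/
noncomputable def traceOutB (ρ : Matrix (a × b × c) (a × b × c) ℂ) :
    Matrix (a × c) (a × c) ℂ :=
  Matrix.of fun p q => ∑ j : b, ρ (p.1, j, p.2) (q.1, j, q.2)

/-- Partial trace over system `A` of a tripartite matrix. -/
noncomputable def traceOutA (ρ : Matrix (a × b × c) (a × b × c) ℂ) :
    Matrix (b × c) (b × c) ℂ :=
  Matrix.of fun p q => ∑ i : a, ρ (i, p.1, p.2) (i, q.1, q.2)

/-- Reduction onto system `A` of a tripartite matrix. -/
noncomputable def redA (ρ : Matrix (a × b × c) (a × b × c) ℂ) : Matrix a a ℂ :=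
  Matrix.of fun i k => ∑ j : b, ∑ m : c, ρ (i, j, m) (k, j, m)

/-- Reduction onto system `B` of a tripartite matrix. -/
noncomputable def redB (ρ : Matrix (a × b × c) (a × b × c) ℂ) : Matrix b b ℂ :=
  Matrix.of fun j l => ∑ i : a, ∑ m : c, ρ (i, j, m) (i, l, m)

/-- Reduction onto system `C` of a tripartite matrix. -/
noncomputable def redC (ρ : Matrix (a × b × c) (a × b × c) ℂ) : Matrix c c ℂ :=
  Matrix.of fun m m' => ∑ i : a, ∑ j : b, ρ (i, j, m) (i, j, m')

/-- Saturation for tripartite pure states: if `ρ` is positive semidefinite of rank one,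
then `r(ρ_AB) · r(ρ_AC) = r(ρ_BC)` if and only if `r(ρ_B) · r(ρ_C) = r(ρ_A)`. -/
theorem saturation_iff_of_pure
    [DecidableEq a] [DecidableEq b] [DecidableEq c]
    (ρ : Matrix (a × b × c) (a × b × c) ℂ) (hρ : ρ.PosSemidef) (hpure : ρ.rank = 1) :
    (traceOutC ρ).rank * (traceOutB ρ).rank = (traceOutA ρ).rank ↔
      (redB ρ).rank * (redC ρ).rank = (redA ρ).rank := by
  obtain ⟨v, hv⟩ := pure_decomp ρ hρ hpure
  set M : Matrix (a × b) c ℂ := Matrix.of fun p m => v (p.1, p.2, m) with hM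
  set N : Matrix (a × c) b ℂ := Matrix.of fun p j => v (p.1, j, p.2) with hN
  set P : Matrix (b × c) a ℂ := Matrix.of fun p i => v (i, p.1, p.2) with hP
  have hC1 : traceOutC ρ = (M * Mᴴ).map star := by
    ext p q
    simp [traceOutC, hv, mul_apply, conjTranspose_apply, hM, map_sum, mul_comm]
  have hC2 : redC ρ = Mᴴ * M := by
    ext m m'
    simp [redC, hv, mul_apply, conjTranspose_apply, hM, Fintype.sum_prod_type]
  have hB1 : traceOutB ρ = (N * Nᴴ).map star := by
    ext p q
    simp [traceOutB, hv, mul_apply, conjTranspose_apply, hN, map_sum, mul_comm]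
  have hB2 : redB ρ = Nᴴ * N := by
    ext j l
    simp [redB, hv, mul_apply, conjTranspose_apply, hN, Fintype.sum_prod_type]
  have hA1 : traceOutA ρ = (P * Pᴴ).map star := by
    ext p q
    simp [traceOutA, hv, mul_apply, conjTranspose_apply, hP, map_sum, mul_comm]
  have hA2 : redA ρ = Pᴴ * P := by
    ext i k
    simp [redA, hv, mul_apply, conjTranspose_apply, hP, Fintype.sum_prod_type]
  rw [hC1, hC2, hB1, hB2, hA1, hA2, rank_map_star, rank_map_star, rank_map_star,
    rank_self_mul_conjTranspose, rank_self_mul_conjTranspose, rank_self_mul_conjTranspose,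
    rank_conjTranspose_mul_self, rank_conjTranspose_mul_self, rank_conjTranspose_mul_self,
    Nat.mul_comm]

end
end

section
/- Saturation for PPT states: let ρ : Matrix (a × b × c) (a × b × c) ℂ be positive semidefinite and suppose its partial transpose on the first system ρ^{Γ_A}, defined by ρ^{Γ_A} (i,j,m) (k,l,m') = ρ (k,j,m) (i,l,m'), is also positive semidefinite. Then r(ρ_AB) · r(ρ_AC) = r(ρ_BC) if and only if r(ρ_AB) = r(ρ_B), r(ρ_AC) = r(ρ_C), and r(ρ_B) · r(ρ_C) = r(ρ_BC). -/
set_option linter.unusedSectionVars false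
set_option maxHeartbeats 1000000


open Matrix Module LinearMap
open scoped ComplexOrder

namespace SatAux

variable {n α β γ : Type*} [Fintype n] [Fintype α] [Fintype γ]

/-- Generalized partial trace along an indexing function. -/
noncomputable def pt (ρ : Matrix n n ℂ) (e : α → γ → n) : Matrix α α ℂ :=
  Matrix.of fun p q => ∑ m : γ, ρ (e p m) (e q m)

noncomputable def emb [DecidableEq n] (e : α → γ → n) (m : γ) : Matrix n α ℂ :=
  Matrix.of fun i p => if i = e p m then 1 else 0

lemma pt_eq_sum [DecidableEq n] (ρ : Matrix n n ℂ) (e : α → γ → n) :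
    pt ρ e = ∑ m : γ, (emb e m)ᴴ * ρ * (emb e m) := by
  ext p q
  simp only [Matrix.sum_apply, pt, Matrix.of_apply, Matrix.mul_apply, emb,
    conjTranspose_apply, apply_ite (star : ℂ → ℂ), star_one, star_zero, ite_mul, one_mul,
    zero_mul, mul_ite, mul_one, mul_zero]
  refine Finset.sum_congr rfl fun m _ => ?_
  rw [Finset.sum_ite_eq' Finset.univ (e q m)]
  simp only [Finset.mem_univ, if_true]
  rw [Finset.sum_ite_eq' Finset.univ (e p m)]
  simp

lemma posSemidef_sum {ι : Type*} (s : Finset ι) (M : ι → Matrix n n ℂ)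
    (h : ∀ i ∈ s, (M i).PosSemidef) : (∑ i ∈ s, M i).PosSemidef :=
  Finset.sum_induction M Matrix.PosSemidef (fun _ _ ha hb => ha.add hb)
    (Matrix.PosSemidef.zero) h

lemma pt_posSemidef [DecidableEq n] {ρ : Matrix n n ℂ} (hρ : ρ.PosSemidef) (e : α → γ → n) :
    (pt ρ e).PosSemidef := by
  rw [pt_eq_sum]
  refine posSemidef_sum _ _ fun m _ => ?_
  simpa only [conjTranspose_conjTranspose] using hρ.mul_mul_conjTranspose_same (emb e m)ᴴ


lemma exists_eq_ct_mul_self {m : Type*} [Fintype m] [DecidableEq m] {ρ : Matrix m m ℂ}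
    (hρ : ρ.PosSemidef) : ∃ B : Matrix m m ℂ, ρ = Bᴴ * B := by
  open MatrixOrder in
  obtain ⟨B, hB⟩ := CStarAlgebra.nonneg_iff_eq_star_mul_self.mp hρ.nonneg
  exact ⟨B, by rw [hB, star_eq_conjTranspose]⟩

lemma diag_nonneg {ρ : Matrix n n ℂ} (hρ : ρ.PosSemidef) (i : n) : 0 ≤ ρ i i := by
  classical
  obtain ⟨B, rfl⟩ := SatAux.exists_eq_ct_mul_self hρ
  have : (Bᴴ * B) i i = star (fun s => B s i) ⬝ᵥ (fun s => B s i) := by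
    simp [Matrix.mul_apply, dotProduct, Matrix.conjTranspose_apply]
  rw [this]
  exact dotProduct_star_self_nonneg _

lemma psd_eq_zero_of_diag {ρ : Matrix n n ℂ} (hρ : ρ.PosSemidef)
    (h : ∀ i, ρ i i = 0) : ρ = 0 := by
  classical
  obtain ⟨B, rfl⟩ := SatAux.exists_eq_ct_mul_self hρ
  have hB : ∀ i, (fun s => B s i) = 0 := by
    intro i
    rw [← dotProduct_star_self_eq_zero (v := fun s => B s i)]
    rw [← h i]
    simp [Matrix.mul_apply, dotProduct, Matrix.conjTranspose_apply]
  have : B = 0 := by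
    ext s i
    exact congrFun (hB i) s
  simp [this]

lemma eq_zero_of_pt_eq_zero [DecidableEq n] {ρ : Matrix n n ℂ} (hρ : ρ.PosSemidef)
    {e : α → γ → n} (hsurj : ∀ i : n, ∃ p m, e p m = i) (h : pt ρ e = 0) : ρ = 0 := by
  refine psd_eq_zero_of_diag hρ fun i => ?_
  obtain ⟨p, m, rfl⟩ := hsurj i
  have h0 : (∑ m' : γ, ρ (e p m') (e p m')) = 0 := by
    have := congrFun (congrFun h p) p
    simpa [pt] using this
  have := (Finset.sum_eq_zero_iff_of_nonneg
    (fun m' (_ : m' ∈ Finset.univ) => diag_nonneg hρ (e p m'))).mp h0 m (Finset.mem_univ m)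
  exact this

lemma quad_eq {κ : Type*} [Fintype κ] (A : Matrix n κ ℂ) (x : κ → ℂ) :
    star x ⬝ᵥ (Aᴴ * A) *ᵥ x = star (A *ᵥ x) ⬝ᵥ (A *ᵥ x) := by
  rw [← Matrix.mulVec_mulVec, Matrix.dotProduct_mulVec, Matrix.vecMul_conjTranspose, star_star]

lemma conj_quad {κ : Type*} [Fintype κ] (A : Matrix n n ℂ) (U : Matrix n κ ℂ) (v : κ → ℂ) :
    star v ⬝ᵥ (Uᴴ * A * U) *ᵥ v = star (U *ᵥ v) ⬝ᵥ A *ᵥ (U *ᵥ v) := by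
  rw [← Matrix.mulVec_mulVec, ← Matrix.mulVec_mulVec, Matrix.dotProduct_mulVec,
    Matrix.vecMul_conjTranspose, star_star]

lemma mulVec_sum_eq (ι : Type*) [Fintype ι] {κ : Type*} [Fintype κ]
    (N : ι → Matrix n κ ℂ) (x : κ → ℂ) :
    (∑ i, N i) *ᵥ x = ∑ i, N i *ᵥ x := by
  ext p
  simp [Matrix.mulVec, dotProduct, Matrix.sum_apply, Finset.sum_mul]
  rw [Finset.sum_comm]

/-- Kernel of a sum `∑ Nᴴ N`. -/
lemma sum_conjTranspose_mul_self_mulVec_eq_zero {ι : Type*} [Fintype ι] {κ : Type*} [Fintype κ]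
    (N : ι → Matrix n κ ℂ) (x : κ → ℂ) :
    (∑ i, (N i)ᴴ * N i) *ᵥ x = 0 ↔ ∀ i, N i *ᵥ x = 0 := by
  constructor
  · intro h0
    have hq : (∑ i, star (N i *ᵥ x) ⬝ᵥ (N i *ᵥ x)) = 0 := by
      have : star x ⬝ᵥ (∑ i, (N i)ᴴ * N i) *ᵥ x = 0 := by rw [h0]; simp
      rw [← this, mulVec_sum_eq]
      have hds : star x ⬝ᵥ (∑ i : ι, ((N i)ᴴ * N i) *ᵥ x) =
          ∑ i : ι, star x ⬝ᵥ (((N i)ᴴ * N i) *ᵥ x) := by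
        simp only [dotProduct, Finset.sum_apply, Finset.mul_sum]
        rw [Finset.sum_comm]
      rw [hds]
      exact Finset.sum_congr rfl fun i _ => (quad_eq (N i) x).symm
    intro i
    have := (Finset.sum_eq_zero_iff_of_nonneg
      (fun i (_ : i ∈ Finset.univ) => dotProduct_star_self_nonneg (N i *ᵥ x))).mp hq i
      (Finset.mem_univ i)
    exact dotProduct_star_self_eq_zero.mp this
  · intro h0
    rw [mulVec_sum_eq]
    refine Finset.sum_eq_zero fun i _ => ?_
    rw [← Matrix.mulVec_mulVec, h0 i, Matrix.mulVec_zero]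

lemma rank_eq_zero_imp {m' : Type*} [Fintype m'] [DecidableEq m']
    (M : Matrix m' m' ℂ) (h : M.rank = 0) : M = 0 := by
  have hr : LinearMap.range M.mulVecLin = ⊥ := by
    rw [← Submodule.finrank_eq_zero (R := ℂ)]
    exact h
  have hv : ∀ x, M *ᵥ x = 0 := by
    intro x
    have : M.mulVecLin x ∈ LinearMap.range M.mulVecLin := LinearMap.mem_range_self _ x
    rw [hr] at this
    simpa using this
  ext i j
  have := congrFun (hv (Pi.single j 1)) i
  simpa [Matrix.mulVec_single] using this


lemma dot_sum {κ : Type*} [Fintype κ] {ι : Type*} [Fintype ι]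
    (x : κ → ℂ) (w : ι → κ → ℂ) :
    star x ⬝ᵥ (∑ i, w i) = ∑ i, star x ⬝ᵥ w i := by
  simp only [dotProduct, Finset.sum_apply, Finset.mul_sum]
  rw [Finset.sum_comm]

lemma quad_sum {κ : Type*} [Fintype κ] {ι : Type*} [Fintype ι]
    (M : ι → Matrix κ κ ℂ) (x : κ → ℂ) :
    star x ⬝ᵥ (∑ i, M i) *ᵥ x = ∑ i, star x ⬝ᵥ (M i) *ᵥ x := by
  rw [mulVec_sum_eq, dot_sum]

lemma finrank_iSup_le {V : Type*} [AddCommGroup V] [Module ℂ V] [FiniteDimensional ℂ V]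
    {ι : Type*} [Fintype ι] (p : ι → Submodule ℂ V) :
    finrank ℂ (⨆ i, p i : Submodule ℂ V) ≤ ∑ i, finrank ℂ (p i) := by
  classical
  have main : ∀ s : Finset ι,
      finrank ℂ (⨆ i ∈ s, p i : Submodule ℂ V) ≤ ∑ i ∈ s, finrank ℂ (p i) := by
    intro s
    refine Finset.induction_on s ?_ ?_
    · simp
    · intro a s ha ih
      rw [Finset.iSup_insert, Finset.sum_insert ha]
      have h2 := Submodule.finrank_sup_add_finrank_inf_eq (p a)
        (⨆ i ∈ s, p i : Submodule ℂ V)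
      omega
  have : (⨆ i, p i : Submodule ℂ V) = ⨆ i ∈ Finset.univ, p i := by simp
  rw [this]
  simpa using main Finset.univ

lemma rank_le_mul_rank {β : Type*} [Fintype β] [DecidableEq β] [DecidableEq γ]
    (τ : Matrix (β × γ) (β × γ) ℂ) (hτ : τ.PosSemidef) :
    τ.rank ≤ (Matrix.of fun j l => ∑ m : γ, τ (j, m) (l, m) : Matrix β β ℂ).rank *
      (Matrix.of fun m m' => ∑ j : β, τ (j, m) (j, m') : Matrix γ γ ℂ).rank := by
  classical
  obtain ⟨C, rfl⟩ := SatAux.exists_eq_ct_mul_self hτ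
  set τ : Matrix (β × γ) (β × γ) ℂ := Cᴴ * C with hτdef
  set τB : Matrix β β ℂ := Matrix.of fun j l => ∑ m : γ, τ (j, m) (l, m) with hτBdef
  set τC : Matrix γ γ ℂ := Matrix.of fun m m' => ∑ j : β, τ (j, m) (j, m') with hτCdef
  set D : γ → Matrix (β × γ) β ℂ := fun m => Matrix.of fun p j => C p (j, m) with hD
  set g : γ → ((β → ℂ) →ₗ[ℂ] (β × γ → ℂ)) := fun m => (D m).mulVecLin with hg
  -- τB as a sum of Gram matrices
  have hτB : τB = ∑ m : γ, (D m)ᴴ * D m := by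
    ext j l
    simp only [hτBdef, Matrix.of_apply, Matrix.sum_apply, Matrix.mul_apply,
      Matrix.conjTranspose_apply, hτdef, hD]
  -- kernel of τB
  have hKer : ∀ x : β → ℂ, τB *ᵥ x = 0 ↔ ∀ m, D m *ᵥ x = 0 := by
    intro x
    rw [hτB]
    exact sum_conjTranspose_mul_self_mulVec_eq_zero D x
  have hKerEq : LinearMap.ker τB.mulVecLin = (⨅ m : γ, LinearMap.ker (g m)) := by
    ext x
    simp only [LinearMap.mem_ker, Matrix.mulVecLin_apply, Submodule.mem_iInf, hg]
    exact hKer x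
  have hrankB : τB.rank + finrank ℂ (⨅ m : γ, LinearMap.ker (g m) : Submodule ℂ (β → ℂ))
      = Fintype.card β := by
    have h1 := LinearMap.finrank_range_add_finrank_ker τB.mulVecLin
    rw [hKerEq] at h1
    simpa [Matrix.rank, Module.finrank_pi] using h1
  -- the map Φ
  let Φ : (γ → ℂ) →ₗ[ℂ] ((β → ℂ) →ₗ[ℂ] (β × γ → ℂ)) :=
    { toFun := fun v => ∑ m : γ, v m • g m
      map_add' := fun v w => by simp [add_smul, Finset.sum_add_distrib]
      map_smul' := fun r v => by simp [smul_smul, Finset.smul_sum] }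
  have hΦapply : ∀ v u, Φ v u = ∑ m : γ, v m • (D m *ᵥ u) := by
    intro v u
    simp [Φ, LinearMap.sum_apply, LinearMap.smul_apply, hg]
  -- U matrices
  set e : γ → β → β × γ := fun m j => (j, m) with he
  set U : β → Matrix (β × γ) γ ℂ := fun j => emb e j with hU
  have hτC : τC = ∑ j : β, (U j)ᴴ * τ * U j := pt_eq_sum τ e
  have hUapp : ∀ (j : β) (v : γ → ℂ), U j *ᵥ v = fun q => (if q.1 = j then v q.2 else 0) := by
    intro j v
    funext q
    rcases q with ⟨l, m⟩
    simp only [hU, Matrix.mulVec, dotProduct, emb, Matrix.of_apply, he,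
      Prod.mk.injEq, ite_mul, one_mul, zero_mul]
    by_cases hlj : l = j
    · subst hlj
      simp
    · simp [hlj]
  -- kernel of τC maps into kernel of Φ
  have hkerΦ : ∀ v : γ → ℂ, τC *ᵥ v = 0 → Φ v = 0 := by
    intro v hv
    have hCU : ∀ j : β, C *ᵥ (U j *ᵥ v) = 0 := by
      have hsum : ∑ j : β, star (U j *ᵥ v) ⬝ᵥ τ *ᵥ (U j *ᵥ v) = 0 := by
        have : star v ⬝ᵥ τC *ᵥ v = 0 := by rw [hv]; simp
        rw [← this, hτC, quad_sum]
        exact Finset.sum_congr rfl fun j _ => (conj_quad τ (U j) v).symm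
      intro j
      have hterm : star (U j *ᵥ v) ⬝ᵥ τ *ᵥ (U j *ᵥ v) = 0 := by
        refine (Finset.sum_eq_zero_iff_of_nonneg
          (fun j (_ : j ∈ Finset.univ) => ?_)).mp hsum j (Finset.mem_univ j)
        exact hτ.dotProduct_mulVec_nonneg (U j *ᵥ v)
      have := (hτ.dotProduct_mulVec_zero_iff (U j *ᵥ v)).mp hterm
      rw [hτdef] at this
      exact (Matrix.conjTranspose_mul_self_mulVec_eq_zero C (U j *ᵥ v)).mp this
    refine LinearMap.ext fun u => ?_
    show Φ v u = (0 : (β → ℂ) →ₗ[ℂ] (β × γ → ℂ)) u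
    rw [hΦapply, LinearMap.zero_apply]
    have hx : (fun q : β × γ => u q.1 * v q.2) = ∑ j : β, u j • (U j *ᵥ v) := by
      funext q
      simp only [Finset.sum_apply, Pi.smul_apply, smul_eq_mul, hUapp]
      have hite : ∀ j, u j * (if q.1 = j then v q.2 else 0)
          = if q.1 = j then u j * v q.2 else 0 := by
        intro j; by_cases h : q.1 = j <;> simp [h]
      simp only [hite]
      rw [Finset.sum_ite_eq Finset.univ q.1 (fun j => u j * v q.2)]
      simp
    have hΦC : (∑ m : γ, v m • (D m *ᵥ u)) = C *ᵥ (fun q : β × γ => u q.1 * v q.2) := by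
      funext p
      simp only [Finset.sum_apply, Pi.smul_apply, smul_eq_mul, Matrix.mulVec,
        dotProduct, hD, Matrix.of_apply]
      rw [Fintype.sum_prod_type]
      rw [Finset.sum_comm]
      refine Finset.sum_congr rfl fun m _ => ?_
      rw [Finset.mul_sum]
      refine Finset.sum_congr rfl fun j _ => by ring
    rw [hΦC, hx]
    have : C *ᵥ (∑ j : β, u j • (U j *ᵥ v)) = ∑ j : β, u j • (C *ᵥ (U j *ᵥ v)) := by
      have hms := map_sum C.mulVecLin (fun j => u j • (U j *ᵥ v)) Finset.univ
      simp only [Matrix.mulVecLin_apply, Matrix.mulVec_smul] at hms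
      exact hms
    rw [this]
    simp only [hCU, smul_zero]
    exact Finset.sum_const_zero
  -- `Φ` sends the standard basis to the slice maps
  have hgW : ∀ m : γ, Φ (Pi.single m 1) = g m := by
    intro m
    show (∑ m' : γ, Pi.single m 1 m' • g m') = g m
    simp only [Pi.single_apply, ite_smul, one_smul, zero_smul]
    rw [Finset.sum_ite_eq' Finset.univ m g]
    simp
  -- bound on the dimension of the range of Φ
  have hkerΦ' : LinearMap.ker τC.mulVecLin ≤ LinearMap.ker Φ := by
    intro v hvv
    exact LinearMap.mem_ker.mpr (hkerΦ v (by simpa [Matrix.mulVecLin_apply] using hvv))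
  have hW : finrank ℂ (LinearMap.range Φ) ≤ τC.rank := by
    have h1 := LinearMap.finrank_range_add_finrank_ker Φ
    have h2 := LinearMap.finrank_range_add_finrank_ker τC.mulVecLin
    have h3 : finrank ℂ (LinearMap.ker τC.mulVecLin) ≤ finrank ℂ (LinearMap.ker Φ) :=
      Submodule.finrank_mono hkerΦ'
    have h4 : τC.rank = finrank ℂ (LinearMap.range τC.mulVecLin) := rfl
    omega
  -- any element of the range of Φ has rank at most τB.rank
  have hmem : ∀ h : (β → ℂ) →ₗ[ℂ] (β × γ → ℂ), h ∈ LinearMap.range Φ →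
      finrank ℂ (LinearMap.range h) ≤ τB.rank := by
    rintro _ ⟨v, rfl⟩
    have hker : (⨅ m : γ, LinearMap.ker (g m) : Submodule ℂ (β → ℂ)) ≤
        LinearMap.ker (Φ v) := by
      intro x hxx
      have hx0 : ∀ m, D m *ᵥ x = 0 := by
        intro m
        have := (Submodule.mem_iInf _).mp hxx m
        simpa [hg, Matrix.mulVecLin_apply] using this
      refine LinearMap.mem_ker.mpr ?_
      rw [hΦapply]
      simp [hx0]
    have h1 := LinearMap.finrank_range_add_finrank_ker (Φ v)
    have h3 := Submodule.finrank_mono hker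
    have h5 : finrank ℂ (β → ℂ) = Fintype.card β := by
      simp [Module.finrank_pi]
    omega
  -- the range of C is contained in the sup of slice ranges
  have hranged : LinearMap.range C.mulVecLin ≤ ⨆ m : γ, LinearMap.range (g m) := by
    rintro _ ⟨x, rfl⟩
    have hdec : C *ᵥ x = ∑ m : γ, D m *ᵥ (fun j => x (j, m)) := by
      funext p
      simp only [Matrix.mulVec, dotProduct, hD, Matrix.of_apply, Finset.sum_apply]
      rw [Fintype.sum_prod_type]
      rw [Finset.sum_comm]
    rw [Matrix.mulVecLin_apply, hdec]
    refine Submodule.sum_mem _ fun m _ => ?_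
    exact Submodule.mem_iSup_of_mem m ⟨_, rfl⟩
  -- basis of the range of Φ
  set W : Submodule ℂ ((β → ℂ) →ₗ[ℂ] (β × γ → ℂ)) := LinearMap.range Φ with hWdef
  haveI : Module.Free ℂ W := Module.Free.of_divisionRing ℂ W
  let bW := Module.finBasis ℂ W
  set R : Submodule ℂ (β × γ → ℂ) := ⨆ t : Fin (finrank ℂ W),
    LinearMap.range ((bW t : W) : (β → ℂ) →ₗ[ℂ] (β × γ → ℂ)) with hRdef
  have hgR : ∀ m : γ, LinearMap.range (g m) ≤ R := by
    intro m
    have hmem' : g m ∈ W := ⟨Pi.single m 1, hgW m⟩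
    have hrepr := bW.sum_repr ⟨g m, hmem'⟩
    have hcoe : g m = ∑ t : Fin (finrank ℂ W),
        (bW.repr ⟨g m, hmem'⟩ t) • ((bW t : W) : (β → ℂ) →ₗ[ℂ] (β × γ → ℂ)) := by
      have := congrArg (Subtype.val) hrepr
      rw [Submodule.coe_sum] at this
      simp only [Submodule.coe_smul] at this
      exact this.symm
    rintro _ ⟨u, rfl⟩
    have happ : g m u = ∑ t : Fin (finrank ℂ W),
        (bW.repr ⟨g m, hmem'⟩ t) • (((bW t : W) : (β → ℂ) →ₗ[ℂ] (β × γ → ℂ)) u) := by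
      have := LinearMap.congr_fun hcoe u
      simpa [LinearMap.sum_apply, LinearMap.smul_apply] using this
    rw [happ]
    refine Submodule.sum_mem _ fun t _ => Submodule.smul_mem _ _ ?_
    exact Submodule.mem_iSup_of_mem t ⟨u, rfl⟩
  have hfinR : finrank ℂ R ≤ finrank ℂ W * τB.rank := by
    refine le_trans (finrank_iSup_le _) ?_
    have hb : ∀ t : Fin (finrank ℂ W),
        finrank ℂ (LinearMap.range ((bW t : W) : (β → ℂ) →ₗ[ℂ] (β × γ → ℂ))) ≤ τB.rank :=
      fun t => hmem _ (bW t).2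
    calc ∑ t : Fin (finrank ℂ W),
          finrank ℂ (LinearMap.range ((bW t : W) : (β → ℂ) →ₗ[ℂ] (β × γ → ℂ)))
        ≤ ∑ _t : Fin (finrank ℂ W), τB.rank := Finset.sum_le_sum fun t _ => hb t
      _ = finrank ℂ W * τB.rank := by
          simp [Finset.sum_const, Finset.card_univ]
  have hfinal : τ.rank ≤ finrank ℂ R := by
    have hre : τ.rank = finrank ℂ (LinearMap.range C.mulVecLin) := by
      rw [hτdef, Matrix.rank_conjTranspose_mul_self]
      rfl
    rw [hre]
    exact Submodule.finrank_mono (le_trans hranged (iSup_le hgR))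
  calc τ.rank ≤ finrank ℂ R := hfinal
    _ ≤ finrank ℂ W * τB.rank := hfinR
    _ ≤ τC.rank * τB.rank := Nat.mul_le_mul_right _ hW
    _ = τB.rank * τC.rank := Nat.mul_comm _ _


open scoped InnerProductSpace in
lemma core_aux {E F : Type*} [NormedAddCommGroup E] [InnerProductSpace ℂ E]
    [FiniteDimensional ℂ E] [NormedAddCommGroup F] [InnerProductSpace ℂ F]
    [FiniteDimensional ℂ F] {ι : Type*} [DecidableEq ι] (f : ι → F →ₗ[ℂ] E)
    (H : ∀ p q (u : F), f p u = 0 → ∀ v, (inner ℂ (f q u) (f p v) : ℂ) = 0)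
    (s : Finset ι) :
    finrank ℂ F ≤ finrank ℂ (⨅ i ∈ s, LinearMap.ker (f i) : Submodule ℂ F)
      + finrank ℂ (⨆ i ∈ s, LinearMap.range (f i) : Submodule ℂ E) := by
  classical
  refine Finset.induction_on s ?_ ?_
  · have h1 : (⨅ i ∈ (∅ : Finset ι), LinearMap.ker (f i) : Submodule ℂ F) = ⊤ := by simp
    have h2 : (⨆ i ∈ (∅ : Finset ι), LinearMap.range (f i) : Submodule ℂ E) = ⊥ := by simp
    rw [h1, h2]
    simp [finrank_top]
  · intro m s hm ih
    rw [Finset.iInf_insert, Finset.iSup_insert]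
    set K : Submodule ℂ F := ⨅ i ∈ s, LinearMap.ker (f i) with hK
    set Rn : Submodule ℂ E := ⨆ i ∈ s, LinearMap.range (f i) with hRn
    set g' : K →ₗ[ℂ] E := (f m).comp K.subtype with hg'
    have hrn := LinearMap.finrank_range_add_finrank_ker g'
    have hkg : finrank ℂ (LinearMap.ker g') =
        finrank ℂ (LinearMap.ker (f m) ⊓ K : Submodule ℂ F) := by
      have h1 : LinearMap.ker g' = Submodule.comap K.subtype (LinearMap.ker (f m) ⊓ K) := by
        rw [hg', LinearMap.ker_comp]
        ext x
        simp only [Submodule.mem_comap, Submodule.mem_inf]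
        exact ⟨fun h => ⟨h, x.2⟩, fun h => h.1⟩
      rw [h1]
      exact LinearEquiv.finrank_eq (Submodule.comapSubtypeEquivOfLe inf_le_right)
    have hrg : LinearMap.range g' = Submodule.map (f m) K := by
      rw [hg', LinearMap.range_comp, Submodule.range_subtype]
    have horth : Submodule.map (f m) K ≤ Rnᗮ ⊓ (LinearMap.range (f m) ⊔ Rn) := by
      rintro _ ⟨u, hu, rfl⟩
      refine Submodule.mem_inf.mpr ⟨?_, Submodule.mem_sup_left ⟨u, rfl⟩⟩
      rw [Submodule.mem_orthogonal]
      intro w hw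
      have hle : Rn ≤ (ℂ ∙ (f m u))ᗮ := by
        rw [hRn]
        refine iSup_le fun i => iSup_le fun hi => ?_
        rintro _ ⟨v, rfl⟩
        rw [Submodule.mem_orthogonal_singleton_iff_inner_left]
        have hfu : f i u = 0 := by
          have h1 := (Submodule.mem_iInf _).mp hu i
          have h2 := (Submodule.mem_iInf _).mp h1 hi
          exact h2
        rw [inner_eq_zero_symm]
        exact H i m u hfu v
      exact Submodule.mem_orthogonal_singleton_iff_inner_left.mp (hle hw)
    have hdim := Submodule.finrank_add_inf_finrank_orthogonal
      (le_sup_right : Rn ≤ LinearMap.range (f m) ⊔ Rn)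
    have hmapled := Submodule.finrank_mono horth
    rw [hrg, hkg] at hrn
    omega


lemma gram2 {κ κ' : Type*} [Fintype κ] [Fintype κ']
    (U : Matrix n κ ℂ) (V : Matrix n κ' ℂ) (u : κ → ℂ) (v : κ' → ℂ) :
    star u ⬝ᵥ (Uᴴ * V) *ᵥ v = star (U *ᵥ u) ⬝ᵥ (V *ᵥ v) := by
  rw [← Matrix.mulVec_mulVec, Matrix.dotProduct_mulVec, Matrix.vecMul_conjTranspose, star_star]

lemma conj_quad2 {κ κ' : Type*} [Fintype κ] [Fintype κ'] (A : Matrix n n ℂ)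
    (U : Matrix n κ ℂ) (V : Matrix n κ' ℂ) (u : κ → ℂ) (v : κ' → ℂ) :
    star u ⬝ᵥ (Uᴴ * A * V) *ᵥ v = star (U *ᵥ u) ⬝ᵥ A *ᵥ (V *ᵥ v) := by
  rw [← Matrix.mulVec_mulVec, ← Matrix.mulVec_mulVec, Matrix.dotProduct_mulVec,
    Matrix.vecMul_conjTranspose, star_star]

noncomputable def sliceD {α β : Type*} (C : Matrix (α × β) (α × β) ℂ) (i : α) :
    Matrix (α × β) β ℂ := Matrix.of fun p j => C p (i, j)

def ind {α β : Type*} [DecidableEq α] (i : α) (u : β → ℂ) : α × β → ℂ :=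
  fun r => if r.1 = i then u r.2 else 0

noncomputable def embE {α β : Type*} [DecidableEq α] [DecidableEq β] (i : α) :
    Matrix (α × β) β ℂ := Matrix.of fun r j => if r = (i, j) then 1 else 0

lemma embE_mulVec {α β : Type*} [Fintype β] [DecidableEq α] [DecidableEq β]
    (i : α) (u : β → ℂ) : embE i *ᵥ u = ind i u := by
  funext r
  rcases r with ⟨ri, rj⟩
  simp only [embE, ind, Matrix.mulVec, dotProduct, Matrix.of_apply, Prod.mk.injEq,
    ite_mul, one_mul, zero_mul]
  by_cases h : ri = i
  · subst h
    simp only [true_and]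
    rw [Finset.sum_ite_eq Finset.univ rj u]
    simp
  · simp [h]

lemma Bexp {α β : Type*} [Fintype α] [Fintype β] [DecidableEq α] [DecidableEq β]
    (C : Matrix (α × β) (α × β) ℂ) (i k : α) (u w : β → ℂ) :
    star (ind i u) ⬝ᵥ
        ((Matrix.of fun p q : α × β => (Cᴴ * C) (q.1, p.2) (p.1, q.2)) *ᵥ (ind k w))
      = star (sliceD C k *ᵥ u) ⬝ᵥ (sliceD C i *ᵥ w) := by
  have hME : (embE i : Matrix (α × β) β ℂ)ᴴ * (Matrix.of fun p q : α × β => (Cᴴ * C) (q.1, p.2) (p.1, q.2)) * (embE k : Matrix (α × β) β ℂ)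
      = (sliceD C k)ᴴ * sliceD C i := by
    ext j l
    simp only [Matrix.mul_apply, Matrix.conjTranspose_apply, embE, Matrix.of_apply,
      apply_ite (star : ℂ → ℂ), star_one, star_zero, ite_mul, one_mul, zero_mul,
      mul_ite, mul_one, mul_zero, sliceD]
    simp only [Finset.sum_ite_eq', Finset.mem_univ, if_true]
  calc star (ind i u) ⬝ᵥ
        ((Matrix.of fun p q : α × β => (Cᴴ * C) (q.1, p.2) (p.1, q.2)) *ᵥ (ind k w))
      = star (embE i *ᵥ u) ⬝ᵥ
          ((Matrix.of fun p q : α × β => (Cᴴ * C) (q.1, p.2) (p.1, q.2)) *ᵥ (embE k *ᵥ w)) := by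
        rw [embE_mulVec, embE_mulVec]
    _ = star u ⬝ᵥ ((embE i)ᴴ *
          (Matrix.of fun p q : α × β => (Cᴴ * C) (q.1, p.2) (p.1, q.2)) * embE k) *ᵥ w :=
        (conj_quad2 _ _ _ u w).symm
    _ = star u ⬝ᵥ ((sliceD C k)ᴴ * sliceD C i) *ᵥ w := by rw [hME]
    _ = star (sliceD C k *ᵥ u) ⬝ᵥ (sliceD C i *ᵥ w) := gram2 _ _ u w

lemma ppt_key {α β : Type*} [Fintype α] [Fintype β] [DecidableEq α] [DecidableEq β]
    (C : Matrix (α × β) (α × β) ℂ)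
    (hppt : (Matrix.of fun p q : α × β => (Cᴴ * C) (q.1, p.2) (p.1, q.2)).PosSemidef)
    (p q : α) (u : β → ℂ) (hu : sliceD C p *ᵥ u = 0) (v : β → ℂ) :
    star (sliceD C q *ᵥ u) ⬝ᵥ (sliceD C p *ᵥ v) = 0 := by
  by_cases hpq : q = p
  · subst hpq
    -- here the second factor vanishes? no: first uses q; use hu on second factor
    rw [hu]
    simp
  · set M : Matrix (α × β) (α × β) ℂ :=
      Matrix.of fun p q : α × β => (Cᴴ * C) (q.1, p.2) (p.1, q.2) with hM
    set z : ℂ := star (sliceD C q *ᵥ u) ⬝ᵥ (sliceD C p *ᵥ v) with hz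
    set A : ℂ := star (sliceD C q *ᵥ v) ⬝ᵥ (sliceD C q *ᵥ v) with hA
    have hA0 : 0 ≤ A := dotProduct_star_self_nonneg _
    have hQ : ∀ μ : ℂ, 0 ≤ μ * z + star (μ * z) + (star μ * μ) * A := by
      intro μ
      have h0 := hppt.dotProduct_mulVec_nonneg (ind p u + ind q (μ • v))
      have hexp : star (ind p u + ind q (μ • v)) ⬝ᵥ M *ᵥ (ind p u + ind q (μ • v))
          = μ * z + star (μ * z) + (star μ * μ) * A := by
        rw [Matrix.mulVec_add, star_add, add_dotProduct, dotProduct_add,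
          dotProduct_add]
        rw [hM]
        rw [Bexp C p p u u, Bexp C p q u (μ • v), Bexp C q p (μ • v) u,
          Bexp C q q (μ • v) (μ • v)]
        rw [hu]
        have hsz : star (sliceD C p *ᵥ v) ⬝ᵥ (sliceD C q *ᵥ u) = star z := by
          rw [hz, star_dotProduct]
        simp only [star_zero, zero_dotProduct, dotProduct_zero,
          Matrix.mulVec_smul, star_smul, smul_dotProduct, dotProduct_smul,
          smul_eq_mul, zero_add, hsz]
        rw [← hz, ← hA, star_mul']
        ring
      rw [hexp] at h0
      exact h0
    -- scalar argument: conclude z = 0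
    have him : A.im = 0 ∧ 0 ≤ A.re := by
      have h := Complex.le_def.mp hA0
      refine ⟨?_, ?_⟩
      · have := h.2
        simpa using this.symm
      · have := h.1
        simpa using this
    set t : ℝ := 1 / (A.re + 1) with ht
    have htpos : 0 < t := by
      rw [ht]
      have : (0:ℝ) < A.re + 1 := by linarith [him.2]
      positivity
    have hQ' := hQ (-(t : ℂ) * star z)
    have hzz : star z * z = ((Complex.normSq z : ℝ) : ℂ) := by
      rw [Complex.star_def, Complex.normSq_eq_conj_mul_self]
    have hc1 : (-(t : ℂ) * star z) * z = ((-(t * Complex.normSq z) : ℝ) : ℂ) := by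
      rw [mul_assoc, hzz]
      push_cast
      ring
    have hstart : star (-(t : ℂ) * star z) = -(t : ℂ) * z := by
      simp [star_mul', Complex.star_def, Complex.conj_ofReal]
    have hc3 : star (-(t : ℂ) * star z) * (-(t : ℂ) * star z)
        = (((t^2 * Complex.normSq z : ℝ)) : ℂ) := by
      rw [hstart]
      have : -(t : ℂ) * z * (-(t : ℂ) * star z) = ((t:ℂ) * (t:ℂ)) * (star z * z) := by ring
      rw [this, hzz]
      push_cast
      ring
    rw [hc1, hc3] at hQ'
    rw [show star ((-(t * Complex.normSq z) : ℝ) : ℂ) = ((-(t * Complex.normSq z) : ℝ) : ℂ)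
      from by simp [Complex.star_def, Complex.conj_ofReal]] at hQ'
    have hre := (Complex.le_def.mp hQ').1
    have hre' : (0:ℝ) ≤ -(t * Complex.normSq z) + -(t * Complex.normSq z)
        + (t^2 * Complex.normSq z) * A.re := by
      simpa [Complex.add_re, Complex.ofReal_re, Complex.mul_re, Complex.ofReal_im,
        him.1, ← Complex.ofReal_pow] using hre
    have hnz : Complex.normSq z = 0 := by
      by_contra hne
      have hpos : 0 < Complex.normSq z :=
        lt_of_le_of_ne (Complex.normSq_nonneg z) (Ne.symm hne)
      have h2 : t * A.re < 1 := by
        rw [ht, div_mul_eq_mul_div, one_mul]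
        exact (div_lt_one (by linarith [him.2])).mpr (by linarith [him.2])
      have h4 : 0 < t * Complex.normSq z := mul_pos htpos hpos
      have h5 : t^2 * Complex.normSq z * A.re < t * Complex.normSq z := by
        have he : t^2 * Complex.normSq z * A.re
            = (t * Complex.normSq z) * (t * A.re) := by ring
        rw [he]
        calc (t * Complex.normSq z) * (t * A.re)
            < (t * Complex.normSq z) * 1 := by
              exact mul_lt_mul_of_pos_left h2 h4
          _ = t * Complex.normSq z := mul_one _
      linarith
    show z = 0
    exact Complex.normSq_eq_zero.mp hnz


lemma rank_red_le_rank {α β : Type*} [Fintype α] [Fintype β] [DecidableEq α] [DecidableEq β]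
    (σ : Matrix (α × β) (α × β) ℂ) (hσ : σ.PosSemidef)
    (hppt : (Matrix.of fun p q : α × β => σ (q.1, p.2) (p.1, q.2)).PosSemidef) :
    (Matrix.of fun j l => ∑ i : α, σ (i, j) (i, l) : Matrix β β ℂ).rank ≤ σ.rank := by
  classical
  obtain ⟨C, rfl⟩ := SatAux.exists_eq_ct_mul_self hσ
  set σβ : Matrix β β ℂ := Matrix.of fun j l => ∑ i : α, (Cᴴ * C) (i, j) (i, l) with hσβ
  set D : α → Matrix (α × β) β ℂ := fun i => sliceD C i with hD
  have hσβsum : σβ = ∑ i : α, (D i)ᴴ * D i := by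
    ext j l
    simp only [hσβ, Matrix.of_apply, Matrix.sum_apply, Matrix.mul_apply,
      Matrix.conjTranspose_apply, hD, sliceD]
  set f : α → (EuclideanSpace ℂ β →ₗ[ℂ] EuclideanSpace ℂ (α × β)) :=
    fun i => Matrix.toEuclideanLin (D i) with hf
  -- hypothesis for the core lemma
  have H : ∀ p q (u : EuclideanSpace ℂ β), f p u = 0 →
      ∀ v, (inner ℂ (f q u) (f p v) : ℂ) = 0 := by
    intro p q u hu v
    have hu' : sliceD C p *ᵥ u = 0 :=
      (WithLp.toLp_eq_zero (p := 2) (x := sliceD C p *ᵥ WithLp.ofLp u)).mp hu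
    rw [EuclideanSpace.inner_eq_star_dotProduct, dotProduct_comm]
    exact ppt_key C hppt p q u hu' v
  have hcore := core_aux f H Finset.univ
  have huniv1 : (⨅ i ∈ Finset.univ, LinearMap.ker (f i) : Submodule ℂ (EuclideanSpace ℂ β))
      = ⨅ i, LinearMap.ker (f i) := by simp
  have huniv2 : (⨆ i ∈ Finset.univ, LinearMap.range (f i) :
      Submodule ℂ (EuclideanSpace ℂ (α × β))) = ⨆ i, LinearMap.range (f i) := by simp
  rw [huniv1, huniv2, finrank_euclideanSpace] at hcore
  -- kernel identification
  have hker : LinearMap.ker (Matrix.toEuclideanLin σβ) = ⨅ i, LinearMap.ker (f i) := by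
    ext x
    simp only [LinearMap.mem_ker, Submodule.mem_iInf, hf]
    simp only [Matrix.toEuclideanLin_apply, WithLp.toLp_eq_zero]
    rw [hσβsum]
    exact sum_conjTranspose_mul_self_mulVec_eq_zero D x
  -- range identification
  have hrange : LinearMap.range (Matrix.toEuclideanLin C) = ⨆ i, LinearMap.range (f i) := by
    apply le_antisymm
    · rintro y ⟨x, rfl⟩
      have hdec : (Matrix.toEuclideanLin C) x = ∑ i : α, f i (WithLp.toLp 2 (fun j => x (i, j))) := by
        apply WithLp.ofLp_injective 2
        rw [WithLp.ofLp_sum]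
        show C *ᵥ x = ∑ i : α, D i *ᵥ (fun j => x (i, j))
        funext p
        simp only [Matrix.mulVec, dotProduct, hD, sliceD, Matrix.of_apply,
          Finset.sum_apply]
        rw [Fintype.sum_prod_type]
      rw [hdec]
      exact Submodule.sum_mem _ fun i _ => Submodule.mem_iSup_of_mem i ⟨_, rfl⟩
    · refine iSup_le fun i => ?_
      rintro _ ⟨u, rfl⟩
      refine ⟨WithLp.toLp 2 (ind i u), ?_⟩
      apply WithLp.ofLp_injective 2
      show C *ᵥ (ind i u) = D i *ᵥ u
      funext p
      simp only [ind, Matrix.mulVec, dotProduct, hD, sliceD, Matrix.of_apply]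
      rw [Fintype.sum_prod_type]
      have hcol : ∀ i' : α, ∑ j : β, C p (i', j) * (if i' = i then u j else 0)
          = if i' = i then ∑ j : β, C p (i, j) * u j else 0 := by
        intro i'
        by_cases h : i' = i
        · subst h; simp
        · simp [h]
      simp only [hcol]
      rw [Finset.sum_ite_eq' Finset.univ i]
      simp
  -- rank identities
  have h1 : (Cᴴ * C).rank = finrank ℂ (LinearMap.range (Matrix.toEuclideanLin C)) := by
    rw [Matrix.rank_conjTranspose_mul_self, Matrix.toEuclideanLin_eq_toLin]
    exact Matrix.rank_eq_finrank_range_toLin C _ _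
  have h2 : σβ.rank = finrank ℂ (LinearMap.range (Matrix.toEuclideanLin σβ)) := by
    rw [Matrix.toEuclideanLin_eq_toLin]
    exact Matrix.rank_eq_finrank_range_toLin σβ _ _
  have h3 := LinearMap.finrank_range_add_finrank_ker (Matrix.toEuclideanLin σβ)
  rw [hker] at h3
  rw [finrank_euclideanSpace] at h3
  rw [← hrange] at hcore
  rw [← h1] at hcore
  omega

end SatAux



open Matrix
open scoped ComplexOrder

section
variable {a b c : Type*} [Fintype a] [Fintype b] [Fintype c]

/-- Partial transpose on system `A` of a tripartite matrix. -/
noncomputable def ptOnA (ρ : Matrix (a × b × c) (a × b × c) ℂ) :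
    Matrix (a × b × c) (a × b × c) ℂ :=
  Matrix.of fun p q => ρ (q.1, p.2.1, p.2.2) (p.1, q.2.1, q.2.2)

/-- Saturation for PPT states: if `ρ` and its partial transpose on system `A` are both
positive semidefinite, then `r(ρ_AB) · r(ρ_AC) = r(ρ_BC)` if and only if
`r(ρ_AB) = r(ρ_B)`, `r(ρ_AC) = r(ρ_C)`, and `r(ρ_B) · r(ρ_C) = r(ρ_BC)`. -/
theorem saturation_iff_of_PPT
    [DecidableEq a] [DecidableEq b] [DecidableEq c]
    (ρ : Matrix (a × b × c) (a × b × c) ℂ) (hρ : ρ.PosSemidef)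
    (hPPT : (ptOnA ρ).PosSemidef) :
    (traceOutC ρ).rank * (traceOutB ρ).rank = (traceOutA ρ).rank ↔
      (traceOutC ρ).rank = (redB ρ).rank ∧
        (traceOutB ρ).rank = (redC ρ).rank ∧
        (redB ρ).rank * (redC ρ).rank = (traceOutA ρ).rank := by
  classical
  have hAB_eq : traceOutC ρ = SatAux.pt ρ (fun (p : a × b) (m : c) => (p.1, p.2, m)) := rfl
  have hAC_eq : traceOutB ρ = SatAux.pt ρ (fun (p : a × c) (j : b) => (p.1, j, p.2)) := rfl
  have hBC_eq : traceOutA ρ = SatAux.pt ρ (fun (p : b × c) (i : a) => (i, p.1, p.2)) := rfl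
  have hABpsd : (traceOutC ρ).PosSemidef := by rw [hAB_eq]; exact SatAux.pt_posSemidef hρ _
  have hACpsd : (traceOutB ρ).PosSemidef := by rw [hAC_eq]; exact SatAux.pt_posSemidef hρ _
  have hBCpsd : (traceOutA ρ).PosSemidef := by rw [hBC_eq]; exact SatAux.pt_posSemidef hρ _
  have hABppt : (Matrix.of fun p q : a × b =>
      (traceOutC ρ) (q.1, p.2) (p.1, q.2)).PosSemidef := by
    have he : (Matrix.of fun p q : a × b => (traceOutC ρ) (q.1, p.2) (p.1, q.2))
        = SatAux.pt (ptOnA ρ) (fun (p : a × b) (m : c) => (p.1, p.2, m)) := rfl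
    rw [he]
    exact SatAux.pt_posSemidef hPPT _
  have hACppt : (Matrix.of fun p q : a × c =>
      (traceOutB ρ) (q.1, p.2) (p.1, q.2)).PosSemidef := by
    have he : (Matrix.of fun p q : a × c => (traceOutB ρ) (q.1, p.2) (p.1, q.2))
        = SatAux.pt (ptOnA ρ) (fun (p : a × c) (j : b) => (p.1, j, p.2)) := rfl
    rw [he]
    exact SatAux.pt_posSemidef hPPT _
  have hB_le : (redB ρ).rank ≤ (traceOutC ρ).rank := by
    have h := SatAux.rank_red_le_rank (traceOutC ρ) hABpsd hABppt
    have he : (Matrix.of fun j l => ∑ i : a, (traceOutC ρ) (i, j) (i, l) : Matrix b b ℂ)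
        = redB ρ := rfl
    rwa [he] at h
  have hC_le : (redC ρ).rank ≤ (traceOutB ρ).rank := by
    have h := SatAux.rank_red_le_rank (traceOutB ρ) hACpsd hACppt
    have he : (Matrix.of fun m m' => ∑ i : a, (traceOutB ρ) (i, m) (i, m') : Matrix c c ℂ)
        = redC ρ := rfl
    rwa [he] at h
  have hBC_le : (traceOutA ρ).rank ≤ (redB ρ).rank * (redC ρ).rank := by
    have h := SatAux.rank_le_mul_rank (traceOutA ρ) hBCpsd
    have he1 : (Matrix.of fun j l => ∑ m : c, (traceOutA ρ) (j, m) (l, m) : Matrix b b ℂ)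
        = redB ρ := by
      ext j l
      simp only [Matrix.of_apply, traceOutA, redB]
      exact Finset.sum_comm
    have he2 : (Matrix.of fun m m' => ∑ j : b, (traceOutA ρ) (j, m) (j, m') : Matrix c c ℂ)
        = redC ρ := by
      ext m m'
      simp only [Matrix.of_apply, traceOutA, redC]
      exact Finset.sum_comm
    rwa [he1, he2] at h
  by_cases hρ0 : ρ = 0
  · subst hρ0
    have z1 : traceOutC (0 : Matrix (a × b × c) (a × b × c) ℂ) = 0 := by
      ext p q; simp [traceOutC]
    have z2 : traceOutB (0 : Matrix (a × b × c) (a × b × c) ℂ) = 0 := by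
      ext p q; simp [traceOutB]
    have z3 : traceOutA (0 : Matrix (a × b × c) (a × b × c) ℂ) = 0 := by
      ext p q; simp [traceOutA]
    have z4 : redB (0 : Matrix (a × b × c) (a × b × c) ℂ) = 0 := by
      ext p q; simp [redB]
    have z5 : redC (0 : Matrix (a × b × c) (a × b × c) ℂ) = 0 := by
      ext p q; simp [redC]
    rw [z1, z2, z3, z4, z5]
    simp
  · have hABne : traceOutC ρ ≠ 0 := by
      intro h0
      exact hρ0 (SatAux.eq_zero_of_pt_eq_zero hρ
        (e := fun (p : a × b) (m : c) => (p.1, p.2, m))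
        (fun i => ⟨(i.1, i.2.1), i.2.2, rfl⟩) (by rw [← hAB_eq]; exact h0))
    have hACne : traceOutB ρ ≠ 0 := by
      intro h0
      exact hρ0 (SatAux.eq_zero_of_pt_eq_zero hρ
        (e := fun (p : a × c) (j : b) => (p.1, j, p.2))
        (fun i => ⟨(i.1, i.2.2), i.2.1, rfl⟩) (by rw [← hAC_eq]; exact h0))
    have hABpos : 0 < (traceOutC ρ).rank :=
      Nat.pos_of_ne_zero fun h => hABne (SatAux.rank_eq_zero_imp _ h)
    have hACpos : 0 < (traceOutB ρ).rank :=
      Nat.pos_of_ne_zero fun h => hACne (SatAux.rank_eq_zero_imp _ h)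
    constructor
    · intro h
      have e2 : (redB ρ).rank * (redC ρ).rank
          = (traceOutC ρ).rank * (traceOutB ρ).rank := by
        refine le_antisymm (Nat.mul_le_mul hB_le hC_le) ?_
        rw [h]
        exact hBC_le
      have hBeq : (traceOutC ρ).rank = (redB ρ).rank := by
        by_contra hne
        have hlt : (redB ρ).rank < (traceOutC ρ).rank :=
          lt_of_le_of_ne hB_le fun hh => hne hh.symm
        have hstrict : (redB ρ).rank * (redC ρ).rank
            < (traceOutC ρ).rank * (traceOutB ρ).rank :=
          calc (redB ρ).rank * (redC ρ).rank
              ≤ (redB ρ).rank * (traceOutB ρ).rank := Nat.mul_le_mul (le_refl _) hC_le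
            _ < (traceOutC ρ).rank * (traceOutB ρ).rank :=
                mul_lt_mul_of_pos_right hlt hACpos
        omega
      have hCeq : (traceOutB ρ).rank = (redC ρ).rank := by
        by_contra hne
        have hlt : (redC ρ).rank < (traceOutB ρ).rank :=
          lt_of_le_of_ne hC_le fun hh => hne hh.symm
        have hstrict : (redB ρ).rank * (redC ρ).rank
            < (traceOutC ρ).rank * (traceOutB ρ).rank :=
          calc (redB ρ).rank * (redC ρ).rank
              ≤ (traceOutC ρ).rank * (redC ρ).rank := Nat.mul_le_mul hB_le (le_refl _)
            _ < (traceOutC ρ).rank * (traceOutB ρ).rank :=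
                mul_lt_mul_of_pos_left hlt hABpos
        omega
      refine ⟨hBeq, hCeq, ?_⟩
      rw [e2]
      exact h
    · rintro ⟨h1, h2, h3⟩
      rw [h1, h2]
      exact h3

end
end
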